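/- arXiv:0904.2949 — 5 statements merged into one kernel-verified Lean document; each statement's English description precedes it below -/
import Mathlib

section
/- Assume: (D5) p_n^{3/2} L_n →_pr 0, where L_n = max_{j,k} |S_{n,j,k} − Σ_{n,j,k}|; and (D6) there are constants 0 < c₁ ≤ c₂ < ∞ such that every eigenvalue of Σ_n lies in [c₁, c₂] for all n. Then (T_n^* − T_n^0)/p_n^{1/2} →_pr 0. -/
open MeasureTheory ProbabilityTheory Filter Matrix
open scoped ENNReal NNReal BigOperators

/-- `X̄ₙ = n⁻¹ ∑ᵢ Xₙᵢ`. -/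
noncomputable def xbar (p n : ℕ) (x : Fin n → EuclideanSpace ℝ (Fin p)) :
    EuclideanSpace ℝ (Fin p) :=
  (n : ℝ)⁻¹ • ∑ i, x i

/-- `Sₙ = n⁻¹ ∑ᵢ Xₙᵢ Xₙᵢᵀ`. -/
noncomputable def Smat (p n : ℕ) (x : Fin n → EuclideanSpace ℝ (Fin p)) :
    Matrix (Fin p) (Fin p) ℝ :=
  (n : ℝ)⁻¹ • ∑ i, Matrix.of (fun j k => x i j * x i k)

/-- `Tₙ* = n X̄ₙᵀ Sₙ⁻¹ X̄ₙ` (equal to `0` when `Sₙ` is singular, by the `Matrix.inv`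
convention). -/
noncomputable def Tstar (p n : ℕ) (x : Fin n → EuclideanSpace ℝ (Fin p)) : ℝ :=
  (n : ℝ) * ((fun j => xbar p n x j) ⬝ᵥ ((Smat p n x)⁻¹ *ᵥ fun j => xbar p n x j))

/-- `Tₙ⁰ = n X̄ₙᵀ Σₙ⁻¹ X̄ₙ`, the population version of `Tₙ*`. -/
noncomputable def Tzero (p n : ℕ) (x : Fin n → EuclideanSpace ℝ (Fin p))
    (S : Matrix (Fin p) (Fin p) ℝ) : ℝ :=
  (n : ℝ) * ((fun j => xbar p n x j) ⬝ᵥ (S⁻¹ *ᵥ fun j => xbar p n x j))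

/-- `Lₙ = max_{j,k} |Sₙ,ⱼₖ − Σₙ,ⱼₖ|`. -/
noncomputable def Lmax (p n : ℕ) (x : Fin n → EuclideanSpace ℝ (Fin p))
    (S : Matrix (Fin p) (Fin p) ℝ) : ℝ :=
  ⨆ j : Fin p, ⨆ k : Fin p, |Smat p n x j k - S j k|

namespace GPaux


open Matrix

noncomputable def nrm {q : ℕ} (u : Fin q → ℝ) : ℝ := Real.sqrt (u ⬝ᵥ u)

lemma dotProduct_self_nonneg {q : ℕ} (u : Fin q → ℝ) : 0 ≤ u ⬝ᵥ u :=
  Finset.sum_nonneg fun i _ => mul_self_nonneg _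

lemma sq_nrm {q : ℕ} (u : Fin q → ℝ) : nrm u ^ 2 = u ⬝ᵥ u :=
  Real.sq_sqrt (dotProduct_self_nonneg u)

lemma nrm_nonneg {q : ℕ} (u : Fin q → ℝ) : 0 ≤ nrm u := Real.sqrt_nonneg _

lemma abs_dotProduct_le {q : ℕ} (u w : Fin q → ℝ) : |u ⬝ᵥ w| ≤ nrm u * nrm w := by
  have h := Finset.sum_mul_sq_le_sq_mul_sq Finset.univ u w
  have : |u ⬝ᵥ w| = Real.sqrt ((u ⬝ᵥ w) ^ 2) := (Real.sqrt_sq_eq_abs _).symm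
  rw [this, nrm, nrm, ← Real.sqrt_mul (dotProduct_self_nonneg u)]
  apply Real.sqrt_le_sqrt
  simpa [dotProduct, sq] using h

lemma sum_abs_le_sqrt {q : ℕ} (u : Fin q → ℝ) :
    ∑ j, |u j| ≤ Real.sqrt q * nrm u := by
  have h := Finset.sum_mul_sq_le_sq_mul_sq Finset.univ (fun _ : Fin q => (1:ℝ)) (fun j => |u j|)
  have h1 : ∑ j, |u j| = Real.sqrt ((∑ j, (1:ℝ) * |u j|) ^ 2) := by
    rw [Real.sqrt_sq (by positivity)]; simp
  rw [h1, nrm, ← Real.sqrt_mul (by positivity : (0:ℝ) ≤ (q:ℝ))]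
  apply Real.sqrt_le_sqrt
  refine h.trans (le_of_eq ?_)
  congr 1
  · simp
  · simp [dotProduct, sq_abs, sq]
open scoped Pointwise



lemma quad_lower_of_spectrum {q : ℕ} {A : Matrix (Fin q) (Fin q) ℝ} (hA : A.IsHermitian)
    {c : ℝ} (h : ∀ μ ∈ spectrum ℝ A, c ≤ μ) (u : Fin q → ℝ) :
    c * (u ⬝ᵥ u) ≤ u ⬝ᵥ A *ᵥ u := by
  set B := A - (algebraMap ℝ (Matrix (Fin q) (Fin q) ℝ)) c with hB
  have hBh : B.IsHermitian := by
    refine hA.sub ?_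
    rw [Algebra.algebraMap_eq_smul_one]
    show (c • (1 : Matrix (Fin q) (Fin q) ℝ))ᴴ = _
    rw [conjTranspose_smul, conjTranspose_one, star_trivial]
  have hspec : spectrum ℝ B = spectrum ℝ A - {c} := (spectrum.sub_singleton_eq A c).symm
  have hpsd : B.PosSemidef := by
    refine (Matrix.IsHermitian.posSemidef_iff_eigenvalues_nonneg hBh).mpr fun i => ?_
    have hm := Matrix.IsHermitian.eigenvalues_mem_spectrum_real hBh i
    rw [hspec, Set.sub_singleton] at hm
    obtain ⟨a, ha, ha2⟩ := hm
    rw [← ha2]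
    have := h a ha
    simp only [Pi.zero_apply]
    linarith
  have h0 := hpsd.dotProduct_mulVec_nonneg u
  rw [star_trivial] at h0
  have hBu : B *ᵥ u = A *ᵥ u - c • u := by
    rw [hB, Algebra.algebraMap_eq_smul_one, sub_mulVec, smul_mulVec, one_mulVec]
  rw [hBu, dotProduct_sub, dotProduct_smul] at h0
  have : (c • (u ⬝ᵥ u)) = c * (u ⬝ᵥ u) := rfl
  linarith [h0]

lemma quad_upper_of_spectrum {q : ℕ} {A : Matrix (Fin q) (Fin q) ℝ} (hA : A.IsHermitian)
    {c : ℝ} (h : ∀ μ ∈ spectrum ℝ A, μ ≤ c) (u : Fin q → ℝ) :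
    u ⬝ᵥ A *ᵥ u ≤ c * (u ⬝ᵥ u) := by
  have h' : ∀ μ ∈ spectrum ℝ (-A), -c ≤ μ := by
    intro μ hμ
    rw [← spectrum.neg_eq, Set.mem_neg] at hμ
    have := h _ hμ
    linarith
  have := quad_lower_of_spectrum hA.neg h' u
  rw [neg_mulVec, dotProduct_neg] at this
  linarith

/-- Cauchy–Schwarz for the bilinear form of a positive definite matrix. -/
lemma posdef_form_cs {q : ℕ} {A : Matrix (Fin q) (Fin q) ℝ} (hA : A.PosDef)
    (x y : Fin q → ℝ) :
    (x ⬝ᵥ A *ᵥ y) ^ 2 ≤ (x ⬝ᵥ A *ᵥ x) * (y ⬝ᵥ A *ᵥ y) := by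
  by_cases hy : y = 0
  · simp [hy]
  have hC : 0 < y ⬝ᵥ A *ᵥ y := by simpa [star_trivial] using hA.dotProduct_mulVec_pos hy
  have hsymA : ∀ j k, A j k = A k j := fun j k => by
    have := hA.1.apply k j
    simpa using this
  have hsym : y ⬝ᵥ A *ᵥ x = x ⬝ᵥ A *ᵥ y := by
    simp only [dotProduct, mulVec, Finset.mul_sum]
    rw [Finset.sum_comm]
    refine Finset.sum_congr rfl fun k _ => Finset.sum_congr rfl fun j _ => ?_
    rw [hsymA k j]
    ring
  have key : ∀ t : ℝ, 0 ≤ (x ⬝ᵥ A *ᵥ x) + 2*t*(x ⬝ᵥ A *ᵥ y) + t^2*(y ⬝ᵥ A *ᵥ y) := by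
    intro t
    have h0 := (hA.posSemidef).dotProduct_mulVec_nonneg (x + t • y)
    rw [star_trivial] at h0
    have hexp : (x + t • y) ⬝ᵥ A *ᵥ (x + t • y)
        = (x ⬝ᵥ A *ᵥ x) + 2*t*(x ⬝ᵥ A *ᵥ y) + t^2*(y ⬝ᵥ A *ᵥ y) := by
      simp only [mulVec_add, mulVec_smul, dotProduct_add, add_dotProduct, dotProduct_smul,
        smul_dotProduct, smul_eq_mul, hsym]
      ring
    rw [hexp] at h0; exact h0
  have hval := key (-(x ⬝ᵥ A *ᵥ y) / (y ⬝ᵥ A *ᵥ y))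
  have hCne : (y ⬝ᵥ A *ᵥ y) ≠ 0 := ne_of_gt hC
  have h2 : (x ⬝ᵥ A *ᵥ x) + 2 * (-(x ⬝ᵥ A *ᵥ y) / (y ⬝ᵥ A *ᵥ y)) * (x ⬝ᵥ A *ᵥ y)
      + (-(x ⬝ᵥ A *ᵥ y) / (y ⬝ᵥ A *ᵥ y))^2 * (y ⬝ᵥ A *ᵥ y)
      = (x ⬝ᵥ A *ᵥ x) - (x ⬝ᵥ A *ᵥ y)^2 / (y ⬝ᵥ A *ᵥ y) := by
    field_simp
    ring
  rw [h2] at hval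
  calc (x ⬝ᵥ A *ᵥ y)^2 = ((x ⬝ᵥ A *ᵥ y)^2 / (y ⬝ᵥ A *ᵥ y)) * (y ⬝ᵥ A *ᵥ y) := by field_simp
    _ ≤ (x ⬝ᵥ A *ᵥ x) * (y ⬝ᵥ A *ᵥ y) := mul_le_mul_of_nonneg_right (by linarith) hC.le

lemma bilinear_entry_bound {q : ℕ} {M : Matrix (Fin q) (Fin q) ℝ} {L : ℝ}
    (hM : ∀ j k, |M j k| ≤ L) (u w : Fin q → ℝ) :
    |u ⬝ᵥ M *ᵥ w| ≤ (q : ℝ) * L * (nrm u * nrm w) := by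
  rcases Nat.eq_zero_or_pos q with hq | hq
  · subst hq
    simp [dotProduct]
  have hL0 : 0 ≤ L := le_trans (abs_nonneg _) (hM ⟨0, hq⟩ ⟨0, hq⟩)
  have step1 : |u ⬝ᵥ M *ᵥ w| ≤ ∑ j, |u j| * (L * ∑ k, |w k|) := by
    simp only [mulVec, dotProduct]
    refine (Finset.abs_sum_le_sum_abs _ _).trans ?_
    refine Finset.sum_le_sum fun j _ => ?_
    rw [abs_mul]
    refine mul_le_mul_of_nonneg_left ?_ (abs_nonneg (u j))
    refine (Finset.abs_sum_le_sum_abs _ _).trans ?_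
    rw [Finset.mul_sum]
    refine Finset.sum_le_sum fun k _ => ?_
    rw [abs_mul]
    exact mul_le_mul_of_nonneg_right (hM j k) (abs_nonneg (w k))
  have step2 : ∑ j, |u j| * (L * ∑ k, |w k|) = L * ((∑ j, |u j|) * (∑ k, |w k|)) := by
    rw [← Finset.sum_mul]; ring
  have step3 : (∑ j, |u j|) * (∑ k, |w k|) ≤ (Real.sqrt q * nrm u) * (Real.sqrt q * nrm w) :=
    mul_le_mul (sum_abs_le_sqrt u) (sum_abs_le_sqrt w)
      (Finset.sum_nonneg fun _ _ => abs_nonneg _)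
      (mul_nonneg (Real.sqrt_nonneg _) (nrm_nonneg _))
  have hq2 : Real.sqrt q * Real.sqrt q = (q : ℝ) := Real.mul_self_sqrt (Nat.cast_nonneg q)
  calc |u ⬝ᵥ M *ᵥ w| ≤ L * ((∑ j, |u j|) * (∑ k, |w k|)) := by rw [← step2]; exact step1
    _ ≤ L * ((Real.sqrt q * nrm u) * (Real.sqrt q * nrm w)) :=
        mul_le_mul_of_nonneg_left step3 hL0
    _ = L * ((q : ℝ) * (nrm u * nrm w)) := by rw [mul_mul_mul_comm, hq2]
    _ = (q : ℝ) * L * (nrm u * nrm w) := by ring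

lemma dot_sym_transfer {q : ℕ} {M : Matrix (Fin q) (Fin q) ℝ}
    (hsymM : ∀ j k, M j k = M k j) (a b : Fin q → ℝ) :
    a ⬝ᵥ (M *ᵥ b) = (M *ᵥ a) ⬝ᵥ b := by
  simp only [dotProduct, mulVec, Finset.mul_sum, Finset.sum_mul]
  rw [Finset.sum_comm]
  refine Finset.sum_congr rfl fun k _ => Finset.sum_congr rfl fun j _ => ?_
  rw [hsymM k j]
  ring

lemma nrm_inv_mulVec_le {q : ℕ} {M : Matrix (Fin q) (Fin q) ℝ} {c : ℝ} (hc : 0 < c)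
    (hlow : ∀ u, c * (u ⬝ᵥ u) ≤ u ⬝ᵥ M *ᵥ u) (v : Fin q → ℝ)
    (hMinv : M *ᵥ (M⁻¹ *ᵥ v) = v) :
    nrm (M⁻¹ *ᵥ v) ≤ c⁻¹ * nrm v := by
  set a := M⁻¹ *ᵥ v with ha
  have h1 : c * (a ⬝ᵥ a) ≤ a ⬝ᵥ v := by
    have := hlow a
    rwa [ha, hMinv] at this
  have h2 : a ⬝ᵥ v ≤ nrm a * nrm v := le_trans (le_abs_self _) (abs_dotProduct_le a v)
  have h3 : c * nrm a ^ 2 ≤ nrm a * nrm v := by rw [sq_nrm]; linarith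
  rcases eq_or_lt_of_le (nrm_nonneg a) with h0 | h0
  · rw [← h0]
    exact mul_nonneg (inv_nonneg.mpr hc.le) (nrm_nonneg v)
  have h4 : c * nrm a ≤ nrm v := by nlinarith
  calc nrm a = c⁻¹ * (c * nrm a) := by field_simp
    _ ≤ c⁻¹ * nrm v := mul_le_mul_of_nonneg_left h4 (by positivity)

lemma Smat_apply {q n : ℕ} (x : Fin n → EuclideanSpace ℝ (Fin q)) (j k : Fin q) :
    Smat q n x j k = (n : ℝ)⁻¹ * ∑ i, x i j * x i k := by
  simp [Smat, Matrix.smul_apply, Matrix.sum_apply]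

lemma Smat_symm {q n : ℕ} (x : Fin n → EuclideanSpace ℝ (Fin q)) (j k : Fin q) :
    Smat q n x j k = Smat q n x k j := by
  simp_rw [Smat_apply, mul_comm (x _ j) (x _ k)]

lemma dotProduct_self_pos {q : ℕ} {u : Fin q → ℝ} (hu : u ≠ 0) : 0 < u ⬝ᵥ u := by
  obtain ⟨i, hi⟩ := Function.ne_iff.mp hu
  refine Finset.sum_pos' (fun i _ => mul_self_nonneg _) ⟨i, Finset.mem_univ i, ?_⟩
  exact mul_self_pos.mpr hi

lemma det_key {q n : ℕ} (hq : 0 < q) (x : Fin n → EuclideanSpace ℝ (Fin q))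
    {Sg : Matrix (Fin q) (Fin q) ℝ} (hpd : Sg.PosDef)
    {c₁ c₂ : ℝ} (hc₁ : 0 < c₁) (hc₁₂ : c₁ ≤ c₂)
    (hlow : ∀ u, c₁ * (u ⬝ᵥ u) ≤ u ⬝ᵥ Sg *ᵥ u)
    (hup : ∀ u, u ⬝ᵥ Sg *ᵥ u ≤ c₂ * (u ⬝ᵥ u))
    (hsmall : (q : ℝ) * Lmax q n x Sg ≤ c₁ / 2) :
    |Tstar q n x - Tzero q n x Sg|
      ≤ (2 * c₂ / c₁ ^ 2) * ((q : ℝ) * Lmax q n x Sg) * Tzero q n x Sg := by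
  classical
  set L := Lmax q n x Sg with hLdef
  set v : Fin q → ℝ := fun j => xbar q n x j with hvdef
  set S := Smat q n x with hSdef
  have hEntry : ∀ j k, |S j k - Sg j k| ≤ L := by
    intro j k
    have h1 : |S j k - Sg j k| ≤ ⨆ k', |S j k' - Sg j k'| :=
      le_ciSup (f := fun k' => |S j k' - Sg j k'|) (Set.Finite.bddAbove (Set.finite_range _)) k
    have h2 : (⨆ k', |S j k' - Sg j k'|) ≤ ⨆ j', ⨆ k', |S j' k' - Sg j' k'| :=
      le_ciSup (f := fun j' => ⨆ k', |S j' k' - Sg j' k'|)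
        (Set.Finite.bddAbove (Set.finite_range _)) j
    exact h1.trans h2
  have hL0 : 0 ≤ L := le_trans (abs_nonneg _) (hEntry ⟨0, hq⟩ ⟨0, hq⟩)
  have hqL0 : 0 ≤ (q : ℝ) * L := mul_nonneg (Nat.cast_nonneg q) hL0
  have hEntry' : ∀ j k, |(Sg - S) j k| ≤ L := fun j k => by
    rw [Matrix.sub_apply, abs_sub_comm]; exact hEntry j k
  have hSsym : ∀ j k, S j k = S k j := fun j k => Smat_symm x j k
  have hSherm : S.IsHermitian := Matrix.ext fun j k => by
    rw [Matrix.conjTranspose_apply, star_trivial, hSsym k j]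
  -- quadratic lower bound for S
  have hSlow : ∀ u, (c₁ / 2) * (u ⬝ᵥ u) ≤ u ⬝ᵥ S *ᵥ u := by
    intro u
    have h1 : |u ⬝ᵥ (S - Sg) *ᵥ u| ≤ (q : ℝ) * L * (nrm u * nrm u) :=
      bilinear_entry_bound (fun j k => by rw [Matrix.sub_apply]; exact hEntry j k) u u
    have h4 : nrm u * nrm u = u ⬝ᵥ u := by rw [← sq, sq_nrm]
    rw [h4] at h1
    have h2 : u ⬝ᵥ S *ᵥ u = u ⬝ᵥ Sg *ᵥ u + u ⬝ᵥ (S - Sg) *ᵥ u := by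
      rw [Matrix.sub_mulVec, dotProduct_sub]; ring
    have h3 := hlow u
    have h5 : -((q : ℝ) * L * (u ⬝ᵥ u)) ≤ u ⬝ᵥ (S - Sg) *ᵥ u := neg_le_of_abs_le h1
    have h6 : (q : ℝ) * L * (u ⬝ᵥ u) ≤ (c₁ / 2) * (u ⬝ᵥ u) :=
      mul_le_mul_of_nonneg_right hsmall (dotProduct_self_nonneg u)
    linarith
  have hSpd : S.PosDef := by
    refine Matrix.PosDef.of_dotProduct_mulVec_pos hSherm fun u hu => ?_
    rw [star_trivial]
    have := hSlow u
    have hupos := dotProduct_self_pos hu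
    nlinarith
  -- invertibility
  have hSdet : IsUnit S.det := (Matrix.isUnit_iff_isUnit_det S).mp hSpd.isUnit
  have hSgdet : IsUnit Sg.det := (Matrix.isUnit_iff_isUnit_det Sg).mp hpd.isUnit
  have hSa : S *ᵥ (S⁻¹ *ᵥ v) = v := by
    rw [Matrix.mulVec_mulVec, Matrix.mul_nonsing_inv _ hSdet, Matrix.one_mulVec]
  have hSgb : Sg *ᵥ (Sg⁻¹ *ᵥ v) = v := by
    rw [Matrix.mulVec_mulVec, Matrix.mul_nonsing_inv _ hSgdet, Matrix.one_mulVec]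
  set a := S⁻¹ *ᵥ v with hadef
  set b := Sg⁻¹ *ᵥ v with hbdef
  have hna : nrm a ≤ (c₁ / 2)⁻¹ * nrm v :=
    nrm_inv_mulVec_le (by positivity) hSlow v hSa
  have hnb : nrm b ≤ c₁⁻¹ * nrm v := nrm_inv_mulVec_le hc₁ hlow v hSgb
  -- w = v ⬝ᵥ Sg⁻¹ v and its properties
  set w := v ⬝ᵥ (Sg⁻¹ *ᵥ v) with hwdef
  have hTstar : Tstar q n x = (n : ℝ) * (v ⬝ᵥ a) := rfl
  have hTzero' : Tzero q n x Sg = (n : ℝ) * w := rfl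
  have hwb : (v ⬝ᵥ b) = w := rfl
  -- the key identity
  have hid : Tstar q n x - Tzero q n x Sg = (n : ℝ) * (a ⬝ᵥ ((Sg - S) *ᵥ b)) := by
    have h1 : (Sg - S) *ᵥ b = v - S *ᵥ b := by rw [Matrix.sub_mulVec, hSgb]
    have h2 : a ⬝ᵥ (S *ᵥ b) = v ⬝ᵥ b := by rw [dot_sym_transfer hSsym a b, hSa]
    have h3 : a ⬝ᵥ v = v ⬝ᵥ a := dotProduct_comm a v
    rw [hTstar, hTzero', h1, dotProduct_sub, h2, h3, hwb]
    ring
  have hw0 : 0 ≤ w := by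
    have := hpd.inv.posSemidef.dotProduct_mulVec_nonneg v
    rwa [star_trivial] at this
  have hv2 : v ⬝ᵥ v ≤ c₂ * w := by
    by_cases hvv : v ⬝ᵥ v = 0
    · rw [hvv]; exact mul_nonneg (le_trans hc₁.le hc₁₂) hw0
    have hvvpos : 0 < v ⬝ᵥ v := lt_of_le_of_ne (dotProduct_self_nonneg v) (Ne.symm hvv)
    have hcs := posdef_form_cs hpd v b
    rw [hSgb] at hcs
    have h1 : b ⬝ᵥ v = w := (dotProduct_comm b v).trans hwb
    rw [h1] at hcs
    have h2 := hup v
    have key : (v ⬝ᵥ v) * (v ⬝ᵥ v) ≤ (c₂ * w) * (v ⬝ᵥ v) := by nlinarith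
    exact le_of_mul_le_mul_right key hvvpos
  -- final bound
  have habs : |a ⬝ᵥ ((Sg - S) *ᵥ b)| ≤ (q : ℝ) * L * (((c₁ / 2)⁻¹ * nrm v) * (c₁⁻¹ * nrm v)) := by
    refine (bilinear_entry_bound hEntry' a b).trans ?_
    refine mul_le_mul_of_nonneg_left ?_ hqL0
    exact mul_le_mul hna hnb (nrm_nonneg b)
      (mul_nonneg (by positivity) (nrm_nonneg v))
  have hsimp : ((c₁ / 2)⁻¹ * nrm v) * (c₁⁻¹ * nrm v) = 2 / c₁ ^ 2 * (v ⬝ᵥ v) := by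
    rw [← sq_nrm v]
    field_simp
  rw [hsimp] at habs
  rw [hid, hTzero', abs_mul, Nat.abs_cast]
  calc (n : ℝ) * |a ⬝ᵥ ((Sg - S) *ᵥ b)|
      ≤ (n : ℝ) * ((q : ℝ) * L * (2 / c₁ ^ 2 * (v ⬝ᵥ v))) :=
        mul_le_mul_of_nonneg_left habs (Nat.cast_nonneg n)
    _ ≤ (n : ℝ) * ((q : ℝ) * L * (2 / c₁ ^ 2 * (c₂ * w))) := by gcongr
    _ = (2 * c₂ / c₁ ^ 2) * ((q : ℝ) * L) * ((n : ℝ) * w) := by ring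

lemma xbar_apply {q n : ℕ} (x : Fin n → EuclideanSpace ℝ (Fin q)) (j : Fin q) :
    xbar q n x j = (n : ℝ)⁻¹ * ∑ i, x i j := by
  simp only [xbar, PiLp.smul_apply, smul_eq_mul]
  rw [WithLp.ofLp_sum, Finset.sum_apply j Finset.univ]

lemma Sg_diag_pos {q : ℕ} {Sg : Matrix (Fin q) (Fin q) ℝ} (h : Sg.PosDef) (j : Fin q) :
    0 < Sg j j := by
  have h2 := h.dotProduct_mulVec_pos (x := Pi.single j (1:ℝ)) (by
    intro h0
    have := congrFun h0 j
    simp [Pi.single_apply] at this)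
  rw [star_trivial] at h2
  simpa [dotProduct, Pi.single_apply, mulVec] using h2

lemma Tzero_integral {Ω : Type*} [MeasurableSpace Ω] (P : Measure Ω) [IsProbabilityMeasure P]
    {q n : ℕ} (hn : 0 < n)
    (X : Fin n → Ω → EuclideanSpace ℝ (Fin q))
    (hXmeas : ∀ i, Measurable (X i))
    (hindep : iIndepFun X P)
    (hint : ∀ (i : Fin n) (j : Fin q), Integrable (fun ω => X i ω j) P)
    (hmean : ∀ (i : Fin n) (j : Fin q), ∫ ω, X i ω j ∂P = 0)
    {Sg : Matrix (Fin q) (Fin q) ℝ}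
    (hSig : ∀ (i : Fin n) (j k : Fin q), Sg j k = ∫ ω, X i ω j * X i ω k ∂P)
    (hSigpd : Sg.PosDef) :
    Integrable (fun ω => Tzero q n (fun i => X i ω) Sg) P ∧
      ∫ ω, Tzero q n (fun i => X i ω) Sg ∂P = q := by
  have hnR : (n : ℝ) ≠ 0 := Nat.cast_ne_zero.mpr hn.ne'
  have hmeasc : ∀ (i : Fin n) (j : Fin q), Measurable (fun ω => X i ω j) :=
    fun i j => ((EuclideanSpace.proj j (𝕜 := ℝ)).measurable).comp (hXmeas i)
  -- integrability of squares
  have hsq : ∀ (i : Fin n) (j : Fin q), Integrable (fun ω => X i ω j * X i ω j) P := by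
    intro i j
    by_contra hni
    have h0 : Sg j j = 0 := by rw [hSig i j j, integral_undef hni]
    exact absurd h0 (Sg_diag_pos hSigpd j).ne'
  -- integrability of products, same i
  have hprod : ∀ (i i' : Fin n) (j k : Fin q),
      Integrable (fun ω => X i ω j * X i' ω k) P := by
    intro i i' j k
    rcases eq_or_ne i i' with rfl | hne
    · refine Integrable.mono' (((hsq i j).add (hsq i k)).div_const 2)
        ((hmeasc i j).mul (hmeasc i k)).aestronglyMeasurable
        (Filter.Eventually.of_forall fun ω => ?_)
      show ‖X i ω j * X i ω k‖ ≤ (X i ω j * X i ω j + X i ω k * X i ω k) / 2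
      rw [Real.norm_eq_abs, abs_mul]
      nlinarith [abs_nonneg (X i ω j), abs_nonneg (X i ω k), sq_abs (X i ω j),
        sq_abs (X i ω k), sq_nonneg (|X i ω j| - |X i ω k|)]
    · have hind : ProbabilityTheory.IndepFun (fun ω => X i ω j) (fun ω => X i' ω k) P :=
        (hindep.indepFun hne).comp (EuclideanSpace.proj j (𝕜 := ℝ)).measurable
          (EuclideanSpace.proj k (𝕜 := ℝ)).measurable
      exact hind.integrable_mul (hint i j) (hint i' k)
  -- integrals of products
  have hintprod : ∀ (i i' : Fin n) (j k : Fin q),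
      ∫ ω, X i ω j * X i' ω k ∂P = if i = i' then Sg j k else 0 := by
    intro i i' j k
    rcases eq_or_ne i i' with rfl | hne
    · simp [← hSig i j k]
    · have hind : ProbabilityTheory.IndepFun (fun ω => X i ω j) (fun ω => X i' ω k) P :=
        (hindep.indepFun hne).comp (EuclideanSpace.proj j (𝕜 := ℝ)).measurable
          (EuclideanSpace.proj k (𝕜 := ℝ)).measurable
      rw [if_neg hne, hind.integral_fun_mul_eq_mul_integral (hmeasc i j).aestronglyMeasurable
        (hmeasc i' k).aestronglyMeasurable, hmean i j, zero_mul]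
  -- pointwise formula for Tzero
  have hT : ∀ ω, Tzero q n (fun i => X i ω) Sg
      = ∑ j, ∑ k, Sg⁻¹ j k * ((n : ℝ)⁻¹ * ∑ i, ∑ i', X i ω j * X i' ω k) := by
    intro ω
    have huu : ∀ (j k : Fin q), (∑ i, X i ω j) * (∑ i', X i' ω k)
        = ∑ i, ∑ i', X i ω j * X i' ω k := fun j k => Finset.sum_mul_sum _ _ _ _
    calc Tzero q n (fun i => X i ω) Sg
        = (n : ℝ) * ∑ j, (xbar q n (fun i => X i ω) j)
            * ∑ k, Sg⁻¹ j k * (xbar q n (fun i => X i ω) k) := rfl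
      _ = ∑ j, ∑ k, Sg⁻¹ j k * ((n : ℝ)⁻¹ * ((∑ i, X i ω j) * (∑ i', X i' ω k))) := by
          simp only [xbar_apply]
          rw [Finset.mul_sum]
          refine Finset.sum_congr rfl fun j _ => ?_
          rw [Finset.mul_sum, Finset.mul_sum]
          refine Finset.sum_congr rfl fun k _ => ?_
          field_simp
      _ = ∑ j, ∑ k, Sg⁻¹ j k * ((n : ℝ)⁻¹ * ∑ i, ∑ i', X i ω j * X i' ω k) := by
          simp only [huu]
  -- integrability
  have hint1 : ∀ (j k : Fin q), Integrable
      (fun ω => Sg⁻¹ j k * ((n : ℝ)⁻¹ * ∑ i, ∑ i', X i ω j * X i' ω k)) P := by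
    intro j k
    have h : Integrable (fun ω => ∑ i, ∑ i', X i ω j * X i' ω k) P :=
      integrable_finset_sum _ fun i _ => integrable_finset_sum _ fun i' _ => hprod i i' j k
    exact (h.const_mul ((n : ℝ)⁻¹)).const_mul (Sg⁻¹ j k)
  have hTint : Integrable (fun ω => Tzero q n (fun i => X i ω) Sg) P := by
    refine (integrable_finset_sum _ fun j _ => integrable_finset_sum _ fun k _ => hint1 j k).congr
      (Filter.Eventually.of_forall fun ω => (hT ω).symm)
  refine ⟨hTint, ?_⟩
  have hBSg : Sg⁻¹ * Sg = 1 :=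
    Matrix.nonsing_inv_mul _ ((Matrix.isUnit_iff_isUnit_det Sg).mp hSigpd.isUnit)
  have hsym : ∀ j k, Sg j k = Sg k j := by
    intro j k
    rw [hSig ⟨0, hn⟩ j k, hSig ⟨0, hn⟩ k j]
    congr 1
    funext ω
    ring
  calc ∫ ω, Tzero q n (fun i => X i ω) Sg ∂P
      = ∫ ω, ∑ j, ∑ k, Sg⁻¹ j k * ((n : ℝ)⁻¹ * ∑ i, ∑ i', X i ω j * X i' ω k) ∂P :=
        integral_congr_ae (Filter.Eventually.of_forall hT)
    _ = ∑ j, ∑ k, ∫ ω, Sg⁻¹ j k * ((n : ℝ)⁻¹ * ∑ i, ∑ i', X i ω j * X i' ω k) ∂P := by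
        rw [integral_finset_sum _ fun j _ => integrable_finset_sum _ fun k _ => hint1 j k]
        exact Finset.sum_congr rfl fun j _ =>
          integral_finset_sum _ fun k _ => hint1 j k
    _ = ∑ j, ∑ k, Sg⁻¹ j k * Sg j k := by
        refine Finset.sum_congr rfl fun j _ => Finset.sum_congr rfl fun k _ => ?_
        rw [integral_const_mul, integral_const_mul, integral_finset_sum _
          fun i _ => integrable_finset_sum _ fun i' _ => hprod i i' j k]
        have : ∀ i : Fin n, ∫ ω, ∑ i', X i ω j * X i' ω k ∂P = Sg j k := by
          intro i
          rw [integral_finset_sum _ fun i' _ => hprod i i' j k]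
          simp [hintprod]
        simp only [this, Finset.sum_const, Finset.card_univ, Fintype.card_fin, nsmul_eq_mul]
        field_simp
    _ = ∑ j, (Sg⁻¹ * Sg) j j := by
        refine Finset.sum_congr rfl fun j _ => ?_
        rw [Matrix.mul_apply]
        exact Finset.sum_congr rfl fun k _ => by rw [hsym j k]
    _ = (q : ℝ) := by
        rw [hBSg]
        simp [Matrix.one_apply]

lemma Tzero_nonneg {q n : ℕ} (x : Fin n → EuclideanSpace ℝ (Fin q))
    {Sg : Matrix (Fin q) (Fin q) ℝ} (hpd : Sg.PosDef) : 0 ≤ Tzero q n x Sg := by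
  refine mul_nonneg (Nat.cast_nonneg n) ?_
  have := hpd.inv.posSemidef.dotProduct_mulVec_nonneg (fun j => xbar q n x j)
  rwa [star_trivial] at this

lemma Tstar_zero_of_q {q n : ℕ} (hq : q = 0) (x : Fin n → EuclideanSpace ℝ (Fin q)) :
    Tstar q n x = 0 := by
  subst hq; simp [Tstar, dotProduct]

lemma Tzero_zero_of_q {q n : ℕ} (hq : q = 0) (x : Fin n → EuclideanSpace ℝ (Fin q))
    (Sg : Matrix (Fin q) (Fin q) ℝ) : Tzero q n x Sg = 0 := by
  subst hq; simp [Tzero, dotProduct]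

lemma Tstar_zero_of_n {q n : ℕ} (hn : n = 0) (x : Fin n → EuclideanSpace ℝ (Fin q)) :
    Tstar q n x = 0 := by
  subst hn; simp [Tstar]

lemma Tzero_zero_of_n {q n : ℕ} (hn : n = 0) (x : Fin n → EuclideanSpace ℝ (Fin q))
    (Sg : Matrix (Fin q) (Fin q) ℝ) : Tzero q n x Sg = 0 := by
  subst hn; simp [Tzero]

lemma le_Lmax {q n : ℕ} (x : Fin n → EuclideanSpace ℝ (Fin q))
    (Sg : Matrix (Fin q) (Fin q) ℝ) (j k : Fin q) :
    |Smat q n x j k - Sg j k| ≤ Lmax q n x Sg := by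
  have h1 : |Smat q n x j k - Sg j k| ≤ ⨆ k', |Smat q n x j k' - Sg j k'| :=
    le_ciSup (f := fun k' => |Smat q n x j k' - Sg j k'|)
      (Set.Finite.bddAbove (Set.finite_range _)) k
  exact h1.trans (le_ciSup (f := fun j' => ⨆ k', |Smat q n x j' k' - Sg j' k'|)
    (Set.Finite.bddAbove (Set.finite_range _)) j)

lemma Lmax_nonneg {q n : ℕ} (hq : 0 < q) (x : Fin n → EuclideanSpace ℝ (Fin q))
    (Sg : Matrix (Fin q) (Fin q) ℝ) : 0 ≤ Lmax q n x Sg :=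
  le_trans (abs_nonneg _) (le_Lmax x Sg ⟨0, hq⟩ ⟨0, hq⟩)

lemma rpow_three_halves (q : ℕ) : (q : ℝ) ^ ((3:ℝ)/2) = (q : ℝ) * Real.sqrt q := by
  rcases Nat.eq_zero_or_pos q with h | h
  · subst h
    rw [Nat.cast_zero, Real.zero_rpow (by norm_num), Real.sqrt_zero, zero_mul]
  · have hq : (0:ℝ) < q := by exact_mod_cast h
    rw [show (3:ℝ)/2 = 1 + 1/2 by norm_num, Real.rpow_add hq, Real.rpow_one,
      Real.sqrt_eq_rpow]

end GPaux

/-- **Proposition 4.2 (first part).**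
In the triangular-array setup with i.i.d. mean-zero rows `X n 1, …, X n n` in
`ℝ^{pₙ}` with positive definite covariance matrix `Σₙ`, conditions
(D5) `pₙ^{3/2} Lₙ →_pr 0` and
(D6) the eigenvalues of `Σₙ` stay away from zero and infinity,
imply `(Tₙ* − Tₙ⁰)/pₙ^{1/2} →_pr 0`. -/
theorem growing_p_population_approximation
    {Ω : Type*} [MeasurableSpace Ω] (P : Measure Ω) [IsProbabilityMeasure P]
    (p : ℕ → ℕ)
    (X : (n : ℕ) → Fin n → Ω → EuclideanSpace ℝ (Fin (p n)))
    (hXmeas : ∀ n i, Measurable (X n i))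
    (hindep : ∀ n, iIndepFun (X n) P)
    (hident : ∀ n, ∀ i j : Fin n, IdentDistrib (X n i) (X n j) P P)
    (hint : ∀ n (i : Fin n) (j : Fin (p n)), Integrable (fun ω => X n i ω j) P)
    (hmean : ∀ n (i : Fin n) (j : Fin (p n)), ∫ ω, X n i ω j ∂P = 0)
    (Sig : (n : ℕ) → Matrix (Fin (p n)) (Fin (p n)) ℝ)
    (hSig : ∀ n (i : Fin n) (j k : Fin (p n)),
      Sig n j k = ∫ ω, X n i ω j * X n i ω k ∂P)
    (hSigpd : ∀ n, (Sig n).PosDef)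
    -- (D5)
    (hD5 : TendstoInMeasure P
      (fun n ω => (p n : ℝ) ^ ((3 : ℝ)/2) * Lmax (p n) n (fun i => X n i ω) (Sig n))
      atTop (fun _ => (0 : ℝ)))
    -- (D6)
    (c₁ c₂ : ℝ) (hc₁ : 0 < c₁) (hc₁₂ : c₁ ≤ c₂)
    (heig : ∀ n, spectrum ℝ (Sig n) ⊆ Set.Icc c₁ c₂) :
    TendstoInMeasure P
      (fun n ω => (Tstar (p n) n (fun i => X n i ω)
        - Tzero (p n) n (fun i => X n i ω) (Sig n)) / Real.sqrt (p n))
      atTop (fun _ => (0 : ℝ)) := by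
  classical
  rw [tendstoInMeasure_iff_dist]
  intro ε hε
  rw [ENNReal.tendsto_nhds_zero]
  intro δ hδ
  obtain ⟨m, hm⟩ := ENNReal.exists_inv_nat_lt (a := δ / 2) (ENNReal.half_pos hδ.ne').ne'
  have hm0 : m ≠ 0 := by
    rintro rfl
    exact absurd hm (by simp)
  set K : ℝ := (m : ℝ) with hKdef
  have hK1 : 1 ≤ K := by rw [hKdef]; exact_mod_cast Nat.one_le_iff_ne_zero.mpr hm0
  have hK0 : 0 < K := lt_of_lt_of_le one_pos hK1
  have hc₂ : 0 < c₂ := lt_of_lt_of_le hc₁ hc₁₂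
  set C : ℝ := 2 * c₂ / c₁ ^ 2 with hCdef
  have hC0 : 0 < C := by rw [hCdef]; positivity
  set a : ℝ := min (c₁ / 2) (ε / (C * K)) with hadef
  have ha0 : 0 < a := lt_min (by positivity) (div_pos hε (mul_pos hC0 hK0))
  have hev := (ENNReal.tendsto_nhds_zero.mp (tendstoInMeasure_iff_dist.mp hD5 a ha0)) (δ / 2) (ENNReal.half_pos hδ.ne')
  filter_upwards [hev] with n hn5
  rcases Nat.eq_zero_or_pos (p n) with hq0 | hq
  · have hzero : ∀ ω : Ω, (Tstar (p n) n (fun i => X n i ω)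
        - Tzero (p n) n (fun i => X n i ω) (Sig n)) / Real.sqrt (p n) = 0 := by
      intro ω
      rw [GPaux.Tstar_zero_of_q hq0, GPaux.Tzero_zero_of_q hq0]
      simp
    have hset : {ω | ε ≤ dist ((Tstar (p n) n (fun i => X n i ω)
        - Tzero (p n) n (fun i => X n i ω) (Sig n)) / Real.sqrt (p n)) ((fun _ => (0:ℝ)) ω)}
        = (∅ : Set Ω) := by
      ext ω
      simp only [Set.mem_setOf_eq, hzero ω, dist_self, Set.mem_empty_iff_false, iff_false,
        not_le]
      exact hε
    rw [hset, measure_empty]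
    exact zero_le
  rcases Nat.eq_zero_or_pos n with hn0 | hnpos
  · have hzero : ∀ ω : Ω, (Tstar (p n) n (fun i => X n i ω)
        - Tzero (p n) n (fun i => X n i ω) (Sig n)) / Real.sqrt (p n) = 0 := by
      intro ω
      rw [GPaux.Tstar_zero_of_n hn0, GPaux.Tzero_zero_of_n hn0]
      simp
    have hset : {ω | ε ≤ dist ((Tstar (p n) n (fun i => X n i ω)
        - Tzero (p n) n (fun i => X n i ω) (Sig n)) / Real.sqrt (p n)) ((fun _ => (0:ℝ)) ω)}
        = (∅ : Set Ω) := by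
      ext ω
      simp only [Set.mem_setOf_eq, hzero ω, dist_self, Set.mem_empty_iff_false, iff_false,
        not_le]
      exact hε
    rw [hset, measure_empty]
    exact zero_le
  -- main case : 0 < p n, 0 < n
  have hherm := (hSigpd n).1
  have hlow : ∀ u, c₁ * (u ⬝ᵥ u) ≤ u ⬝ᵥ (Sig n) *ᵥ u :=
    fun u => GPaux.quad_lower_of_spectrum hherm (fun μ hμ => ((heig n) hμ).1) u
  have hup : ∀ u, u ⬝ᵥ (Sig n) *ᵥ u ≤ c₂ * (u ⬝ᵥ u) :=
    fun u => GPaux.quad_upper_of_spectrum hherm (fun μ hμ => ((heig n) hμ).2) u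
  obtain ⟨hTint, hTmean⟩ := GPaux.Tzero_integral P hnpos (X n) (hXmeas n) (hindep n)
    (hint n) (hmean n) (hSig n) (hSigpd n)
  have hqR : (0:ℝ) < (p n : ℝ) := by exact_mod_cast hq
  have hT0nonneg : ∀ ω, 0 ≤ Tzero (p n) n (fun i => X n i ω) (Sig n) :=
    fun ω => GPaux.Tzero_nonneg _ (hSigpd n)
  have hmar := mul_meas_ge_le_integral_of_nonneg
    (Filter.Eventually.of_forall hT0nonneg) hTint (K * (p n : ℝ))
  rw [hTmean, measureReal_def] at hmar
  have hKq : (0:ℝ) < K * (p n : ℝ) := mul_pos hK0 hqR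
  have htr : (P {ω | K * (p n : ℝ) ≤ Tzero (p n) n (fun i => X n i ω) (Sig n)}).toReal
      ≤ 1 / K := by
    have h1 : (P {ω | K * (p n : ℝ) ≤ Tzero (p n) n (fun i => X n i ω) (Sig n)}).toReal
        ≤ (p n : ℝ) / (K * (p n : ℝ)) := by
      rw [le_div_iff₀ hKq]
      linarith [hmar]
    refine h1.trans (le_of_eq ?_)
    field_simp
  have hmarkov : P {ω | K * (p n : ℝ) ≤ Tzero (p n) n (fun i => X n i ω) (Sig n)} ≤ δ / 2 := by
    rw [← ENNReal.ofReal_toReal (measure_ne_top P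
      {ω | K * (p n : ℝ) ≤ Tzero (p n) n (fun i => X n i ω) (Sig n)})]
    refine le_trans (ENNReal.ofReal_le_ofReal htr) ?_
    rw [one_div, hKdef, ENNReal.ofReal_inv_of_pos hK0, ENNReal.ofReal_natCast]
    exact hm.le
  have hsub : {ω | ε ≤ dist ((Tstar (p n) n (fun i => X n i ω)
        - Tzero (p n) n (fun i => X n i ω) (Sig n)) / Real.sqrt (p n)) ((fun _ => (0:ℝ)) ω)}
      ⊆ {ω | a ≤ dist ((p n : ℝ) ^ ((3:ℝ)/2) * Lmax (p n) n (fun i => X n i ω) (Sig n))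
          ((fun _ => (0:ℝ)) ω)}
        ∪ {ω | K * (p n : ℝ) ≤ Tzero (p n) n (fun i => X n i ω) (Sig n)} := by
    intro ω hω
    by_contra hcon
    rw [Set.mem_union] at hcon
    push_neg at hcon
    obtain ⟨hA, hB⟩ := hcon
    simp only [Set.mem_setOf_eq, not_le, dist_zero_right, Real.norm_eq_abs] at hA hB
    simp only [Set.mem_setOf_eq, dist_zero_right, Real.norm_eq_abs] at hω
    have hL0 : 0 ≤ Lmax (p n) n (fun i => X n i ω) (Sig n) :=
      GPaux.Lmax_nonneg hq _ (Sig n)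
    have hsq1 : 1 ≤ Real.sqrt (p n) := by
      rw [show (1:ℝ) = Real.sqrt 1 from (Real.sqrt_one).symm]
      exact Real.sqrt_le_sqrt (by exact_mod_cast hq)
    have hsqpos : (0:ℝ) < Real.sqrt (p n) := lt_of_lt_of_le one_pos hsq1
    have hrpow : (p n : ℝ) ^ ((3:ℝ)/2) = (p n : ℝ) * Real.sqrt (p n) :=
      GPaux.rpow_three_halves (p n)
    have hGa : (p n : ℝ) ^ ((3:ℝ)/2) * Lmax (p n) n (fun i => X n i ω) (Sig n) < a :=
      lt_of_le_of_lt (le_abs_self _) hA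
    have hsmall : (p n : ℝ) * Lmax (p n) n (fun i => X n i ω) (Sig n) ≤ c₁ / 2 := by
      have h1 : (p n : ℝ) * Lmax (p n) n (fun i => X n i ω) (Sig n)
          ≤ (p n : ℝ) * Lmax (p n) n (fun i => X n i ω) (Sig n) * Real.sqrt (p n) :=
        le_mul_of_one_le_right (mul_nonneg hqR.le hL0) hsq1
      have h2 : (p n : ℝ) * Lmax (p n) n (fun i => X n i ω) (Sig n) * Real.sqrt (p n)
          = (p n : ℝ) ^ ((3:ℝ)/2) * Lmax (p n) n (fun i => X n i ω) (Sig n) := by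
        rw [hrpow]; ring
      have h3 := hGa.le.trans (min_le_left (c₁ / 2) (ε / (C * K)))
      rw [h2] at h1
      linarith
    have hkey := GPaux.det_key hq (fun i => X n i ω) (hSigpd n) hc₁ hc₁₂ hlow hup hsmall
    have hqq : Real.sqrt (p n) * Real.sqrt (p n) = (p n : ℝ) := Real.mul_self_sqrt hqR.le
    have haK : a ≤ ε / (C * K) := min_le_right _ _
    set L := Lmax (p n) n (fun i => X n i ω) (Sig n) with hLd
    set T0 := Tzero (p n) n (fun i => X n i ω) (Sig n) with hT0d
    set Ts := Tstar (p n) n (fun i => X n i ω) with hTsd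
    have hT00 : 0 ≤ T0 := hT0nonneg ω
    have hfin : C * ((p n : ℝ) * L) * T0 < ε * Real.sqrt (p n) := by
      have s1 : C * ((p n : ℝ) * L) * T0 ≤ C * ((p n : ℝ) * L) * (K * (p n : ℝ)) :=
        mul_le_mul_of_nonneg_left hB.le
          (mul_nonneg hC0.le (mul_nonneg hqR.le hL0))
      have s2 : C * ((p n : ℝ) * L) * (K * (p n : ℝ))
          = (C * K * Real.sqrt (p n)) * ((p n : ℝ) ^ ((3:ℝ)/2) * L) := by
        rw [hrpow]
        linear_combination (-(C * K * L * (p n : ℝ))) * hqq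
      have s3 : (C * K * Real.sqrt (p n)) * ((p n : ℝ) ^ ((3:ℝ)/2) * L)
          < (C * K * Real.sqrt (p n)) * a :=
        mul_lt_mul_of_pos_left hGa (mul_pos (mul_pos hC0 hK0) hsqpos)
      have s4 : (C * K * Real.sqrt (p n)) * a ≤ (C * K * Real.sqrt (p n)) * (ε / (C * K)) :=
        mul_le_mul_of_nonneg_left haK (mul_nonneg (mul_nonneg hC0.le hK0.le) hsqpos.le)
      have s5 : (C * K * Real.sqrt (p n)) * (ε / (C * K)) = ε * Real.sqrt (p n) := by
        field_simp
      linarith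
    have habs : |Ts - T0| ≤ C * ((p n : ℝ) * L) * T0 := hkey
    have hF : |(Ts - T0) / Real.sqrt (p n)| < ε := by
      rw [abs_div, abs_of_nonneg hsqpos.le, div_lt_iff₀ hsqpos]
      linarith
    exact absurd hω (not_le.mpr hF)
  calc P {ω | ε ≤ dist ((Tstar (p n) n (fun i => X n i ω)
        - Tzero (p n) n (fun i => X n i ω) (Sig n)) / Real.sqrt (p n)) ((fun _ => (0:ℝ)) ω)}
      ≤ P ({ω | a ≤ dist ((p n : ℝ) ^ ((3:ℝ)/2)
            * Lmax (p n) n (fun i => X n i ω) (Sig n)) ((fun _ => (0:ℝ)) ω)}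
          ∪ {ω | K * (p n : ℝ) ≤ Tzero (p n) n (fun i => X n i ω) (Sig n)}) :=
        measure_mono hsub
    _ ≤ P {ω | a ≤ dist ((p n : ℝ) ^ ((3:ℝ)/2)
            * Lmax (p n) n (fun i => X n i ω) (Sig n)) ((fun _ => (0:ℝ)) ω)}
          + P {ω | K * (p n : ℝ) ≤ Tzero (p n) n (fun i => X n i ω) (Sig n)} :=
        measure_union_le _ _
    _ ≤ δ / 2 + δ / 2 := add_le_add hn5 hmarkov
    _ = δ := ENNReal.add_halves δ
end

section
/- For every ε > 0, P{(p_n/√n) D_n ≥ ε} ≤ n · (p_n^{3q/2}/(n^{q/2} ε^q)) · max_{i≤n} E‖X_{n,i}/p_n^{1/2}‖^q. Consequently, under condition (D7) — namely, for some q > 2, sup_n max_{i≤n} E‖X_{n,i}/p_n^{1/2}‖^q < ∞ and p_n^{3+6/(q−2)}/n → 0 — one has (p_n/√n) D_n →_pr 0 (condition (D1)). -/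
open MeasureTheory ProbabilityTheory Filter
open scoped ENNReal NNReal BigOperators

lemma markov_rpow {Ω : Type*} [MeasurableSpace Ω] (P : Measure Ω) [IsProbabilityMeasure P]
    {f : Ω → ℝ} (hnn : ∀ ω, 0 ≤ f ω) {q : ℝ} (hq : 0 < q)
    (hi : Integrable (fun ω => f ω ^ q) P) {t : ℝ} (ht : 0 < t) :
    P {ω | t ≤ f ω} ≤ ENNReal.ofReal ((∫ ω, f ω ^ q ∂P) / t ^ q) := by
  have hset : {ω | t ≤ f ω} = {ω | t ^ q ≤ f ω ^ q} := by
    ext ω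
    simp only [Set.mem_setOf_eq]
    exact (Real.rpow_le_rpow_iff ht.le (hnn ω) hq).symm
  have hmar := mul_meas_ge_le_integral_of_nonneg
    (μ := P) (f := fun ω => f ω ^ q)
    (Filter.Eventually.of_forall fun ω => Real.rpow_nonneg (hnn ω) q) hi (t ^ q)
  have htq : 0 < t ^ q := Real.rpow_pos_of_pos ht q
  have hfin : P {ω | t ^ q ≤ f ω ^ q} ≠ ⊤ := measure_ne_top _ _
  rw [hset, ← ENNReal.ofReal_toReal hfin]
  apply ENNReal.ofReal_le_ofReal
  rw [le_div_iff₀ htq]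
  rw [measureReal_def] at hmar
  linarith [hmar]

lemma sqrt_rpow_aux (x : ℝ) (hx : 0 ≤ x) (q : ℝ) : Real.sqrt x ^ q = x ^ (q / 2) := by
  rw [Real.sqrt_eq_rpow, ← Real.rpow_mul hx]
  ring_nf

/-- `Dₙ = max_{1≤i≤n} ‖Xₙᵢ‖` (Euclidean norm). -/
noncomputable def Dmax (p n : ℕ) (x : Fin n → EuclideanSpace ℝ (Fin p)) : ℝ :=
  ⨆ i : Fin n, ‖x i‖

/-- **Lemma 4.1(b).**
For every `ε > 0`,
`P{(pₙ/√n) Dₙ ≥ ε} ≤ n · (pₙ^{3q/2}/(n^{q/2} εᵠ)) · max_{i≤n} E‖Xₙᵢ/pₙ^{1/2}‖ᵠ`.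
Consequently, under condition (D7) — namely, for some `q > 2`,
`sup_n max_{i≤n} E‖Xₙᵢ/pₙ^{1/2}‖ᵠ < ∞` and `pₙ^{3+6/(q−2)}/n → 0` —
one has `(pₙ/√n) Dₙ →_pr 0` (condition (D1)). -/
theorem Dmax_tail_bound_and_D1_under_moments
    {Ω : Type*} [MeasurableSpace Ω] (P : Measure Ω) [IsProbabilityMeasure P]
    (p : ℕ → ℕ)
    (X : (n : ℕ) → Fin n → Ω → EuclideanSpace ℝ (Fin (p n)))
    (hXmeas : ∀ n i, Measurable (X n i))
    (q : ℝ) (hq : 2 < q)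
    (hint : ∀ n (i : Fin n), Integrable (fun ω => ‖X n i ω‖ ^ q) P) :
    (∀ ε : ℝ, 0 < ε → ∀ n : ℕ,
      P {ω | ε ≤ ((p n : ℝ) / Real.sqrt n) * Dmax (p n) n (fun i => X n i ω)}
        ≤ ENNReal.ofReal ((n : ℝ) * ((p n : ℝ) ^ (3 * q / 2) / ((n : ℝ) ^ (q / 2) * ε ^ q))
            * ⨆ i : Fin n, ∫ ω, ‖(Real.sqrt (p n))⁻¹ • X n i ω‖ ^ q ∂P))
    ∧ ((∃ M : ℝ, ∀ n (i : Fin n), ∫ ω, ‖(Real.sqrt (p n))⁻¹ • X n i ω‖ ^ q ∂P ≤ M) →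
        Tendsto (fun n => (p n : ℝ) ^ (3 + 6 / (q - 2)) / (n : ℝ)) atTop (nhds 0) →
        TendstoInMeasure P
          (fun n ω => ((p n : ℝ) / Real.sqrt n) * Dmax (p n) n (fun i => X n i ω))
          atTop (fun _ => (0 : ℝ))) := by
  have hqpos : (0 : ℝ) < q := by linarith
  have key : ∀ ε : ℝ, 0 < ε → ∀ n : ℕ,
      P {ω | ε ≤ ((p n : ℝ) / Real.sqrt n) * Dmax (p n) n (fun i => X n i ω)}
        ≤ ENNReal.ofReal ((n : ℝ) * ((p n : ℝ) ^ (3 * q / 2) / ((n : ℝ) ^ (q / 2) * ε ^ q))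
            * ⨆ i : Fin n, ∫ ω, ‖(Real.sqrt (p n))⁻¹ • X n i ω‖ ^ q ∂P) := by
    intro ε hε n
    by_cases hn : n = 0
    · subst hn
      have hempty : {ω | ε ≤ ((p 0 : ℝ) / Real.sqrt ((0 : ℕ) : ℝ)) * Dmax (p 0) 0 (fun i => X 0 i ω)} = ∅ := by
        ext ω
        simp [Dmax, Real.iSup_of_isEmpty, not_le, hε]
      rw [hempty]
      simp
    by_cases hp : p n = 0
    · have hempty : {ω | ε ≤ ((p n : ℝ) / Real.sqrt n) * Dmax (p n) n (fun i => X n i ω)} = ∅ := by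
        ext ω
        simp [hp, not_le, hε]
      rw [hempty]
      simp
    -- main case
    have hnpos : (0 : ℝ) < n := Nat.cast_pos.mpr (Nat.pos_of_ne_zero hn)
    have hppos : (0 : ℝ) < p n := Nat.cast_pos.mpr (Nat.pos_of_ne_zero hp)
    have hsn : 0 < Real.sqrt n := Real.sqrt_pos.mpr hnpos
    have hsp : 0 < Real.sqrt (p n) := Real.sqrt_pos.mpr hppos
    set c : ℝ := (p n : ℝ) / Real.sqrt n with hc
    have hcpos : 0 < c := div_pos hppos hsn
    set t : ℝ := ε / c with htdef
    have htpos : 0 < t := div_pos hε hcpos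
    haveI : Nonempty (Fin n) := Fin.pos_iff_nonempty.mp (Nat.pos_of_ne_zero hn)
    have hsub : {ω | ε ≤ c * Dmax (p n) n (fun i => X n i ω)}
        ⊆ ⋃ i : Fin n, {ω | t ≤ ‖X n i ω‖} := by
      intro ω hω
      obtain ⟨i, hi⟩ := Finite.exists_max (fun i : Fin n => ‖X n i ω‖)
      have hD : Dmax (p n) n (fun j => X n j ω) ≤ ‖X n i ω‖ := ciSup_le hi
      have hεc : ε ≤ c * ‖X n i ω‖ :=
        le_trans hω (mul_le_mul_of_nonneg_left hD hcpos.le)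
      exact Set.mem_iUnion.mpr ⟨i, (div_le_iff₀' hcpos).mpr hεc⟩
    have e1 : Real.sqrt (n : ℝ) ^ q = (n : ℝ) ^ (q / 2) := sqrt_rpow_aux _ hnpos.le q
    have e2 : Real.sqrt ((p n : ℕ) : ℝ) ^ q = ((p n : ℕ) : ℝ) ^ (q / 2) :=
      sqrt_rpow_aux _ hppos.le q
    have e3 : ((p n : ℕ) : ℝ) ^ (3 * q / 2) = ((p n : ℕ) : ℝ) ^ (q / 2) * ((p n : ℕ) : ℝ) ^ q := by
      rw [← Real.rpow_add hppos]
      ring_nf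
    have e4 : t ^ q = ε ^ q * (n : ℝ) ^ (q / 2) / ((p n : ℕ) : ℝ) ^ q := by
      rw [htdef, hc, div_div_eq_mul_div, Real.div_rpow (by positivity) hppos.le,
        Real.mul_rpow hε.le (Real.sqrt_nonneg _), e1]
    have hIJ : ∀ i : Fin n, (∫ ω, ‖(Real.sqrt (p n))⁻¹ • X n i ω‖ ^ q ∂P)
        = (Real.sqrt (p n))⁻¹ ^ q * ∫ ω, ‖X n i ω‖ ^ q ∂P := by
      intro i
      rw [← integral_const_mul]
      congr 1
      funext ω
      rw [norm_smul, Real.norm_eq_abs, abs_of_nonneg (inv_nonneg.mpr hsp.le),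
        Real.mul_rpow (inv_nonneg.mpr hsp.le) (norm_nonneg _)]
    have hKI : ∀ i : Fin n,
        (∫ ω, ‖X n i ω‖ ^ q ∂P) / t ^ q
          = (((p n : ℕ) : ℝ) ^ (3 * q / 2) / ((n : ℝ) ^ (q / 2) * ε ^ q))
              * ∫ ω, ‖(Real.sqrt (p n))⁻¹ • X n i ω‖ ^ q ∂P := by
      intro i
      rw [hIJ i, e4, e3, Real.inv_rpow (Real.sqrt_nonneg _), e2]
      have hE : ε ^ q ≠ 0 := (Real.rpow_pos_of_pos hε q).ne'
      have hN : (n : ℝ) ^ (q / 2) ≠ 0 := (Real.rpow_pos_of_pos hnpos _).ne'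
      have hPq : ((p n : ℕ) : ℝ) ^ q ≠ 0 := (Real.rpow_pos_of_pos hppos _).ne'
      have hP2 : ((p n : ℕ) : ℝ) ^ (q / 2) ≠ 0 := (Real.rpow_pos_of_pos hppos _).ne'
      field_simp
    have hS : ∀ i : Fin n, (∫ ω, ‖(Real.sqrt (p n))⁻¹ • X n i ω‖ ^ q ∂P)
        ≤ ⨆ j : Fin n, ∫ ω, ‖(Real.sqrt (p n))⁻¹ • X n j ω‖ ^ q ∂P := fun i =>
      le_ciSup (f := fun j : Fin n => ∫ ω, ‖(Real.sqrt (p n))⁻¹ • X n j ω‖ ^ q ∂P)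
        (Set.Finite.bddAbove (Set.finite_range _)) i
    have hK0 : 0 ≤ ((p n : ℕ) : ℝ) ^ (3 * q / 2) / ((n : ℝ) ^ (q / 2) * ε ^ q) := by
      positivity
    have hterm : ∀ i ∈ Finset.univ, (∫ ω, ‖X n i ω‖ ^ q ∂P) / t ^ q
        ≤ (((p n : ℕ) : ℝ) ^ (3 * q / 2) / ((n : ℝ) ^ (q / 2) * ε ^ q))
            * ⨆ j : Fin n, ∫ ω, ‖(Real.sqrt (p n))⁻¹ • X n j ω‖ ^ q ∂P := fun i _ =>
      (hKI i).le.trans (mul_le_mul_of_nonneg_left (hS i) hK0)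
    calc P {ω | ε ≤ c * Dmax (p n) n (fun i => X n i ω)}
        ≤ P (⋃ i : Fin n, {ω | t ≤ ‖X n i ω‖}) := measure_mono hsub
      _ ≤ ∑ i : Fin n, P {ω | t ≤ ‖X n i ω‖} := measure_iUnion_fintype_le _ _
      _ ≤ ∑ i : Fin n, ENNReal.ofReal ((∫ ω, ‖X n i ω‖ ^ q ∂P) / t ^ q) :=
          Finset.sum_le_sum fun i _ =>
            markov_rpow P (fun ω => norm_nonneg _) hqpos (hint n i) htpos
      _ = ENNReal.ofReal (∑ i : Fin n, (∫ ω, ‖X n i ω‖ ^ q ∂P) / t ^ q) :=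
          (ENNReal.ofReal_sum_of_nonneg fun i _ =>
            div_nonneg (integral_nonneg fun ω => Real.rpow_nonneg (norm_nonneg _) q)
              (Real.rpow_pos_of_pos htpos q).le).symm
      _ ≤ ENNReal.ofReal ((n : ℝ) * ((p n : ℝ) ^ (3 * q / 2) / ((n : ℝ) ^ (q / 2) * ε ^ q))
            * ⨆ i : Fin n, ∫ ω, ‖(Real.sqrt (p n))⁻¹ • X n i ω‖ ^ q ∂P) := by
          apply ENNReal.ofReal_le_ofReal
          rw [mul_assoc]
          calc ∑ i : Fin n, (∫ ω, ‖X n i ω‖ ^ q ∂P) / t ^ q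
              ≤ Finset.univ.card •
                  ((((p n : ℕ) : ℝ) ^ (3 * q / 2) / ((n : ℝ) ^ (q / 2) * ε ^ q))
                    * ⨆ j : Fin n, ∫ ω, ‖(Real.sqrt (p n))⁻¹ • X n j ω‖ ^ q ∂P) :=
                Finset.sum_le_card_nsmul _ _ _ hterm
            _ = (n : ℝ) * _ := by simp [Finset.card_univ, nsmul_eq_mul]
  refine ⟨key, ?_⟩
  rintro ⟨M, hM⟩ hpn
  rw [tendstoInMeasure_iff_dist]
  intro ε hε
  -- nonnegativity of the random variables
  have hnonneg : ∀ n ω, 0 ≤ ((p n : ℝ) / Real.sqrt n) * Dmax (p n) n (fun i => X n i ω) := by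
    intro n ω
    apply mul_nonneg (div_nonneg (Nat.cast_nonneg _) (Real.sqrt_nonneg _))
    exact Real.iSup_nonneg fun i => norm_nonneg _
  have hsetdist : ∀ n : ℕ,
      {ω | ε ≤ dist (((p n : ℝ) / Real.sqrt n) * Dmax (p n) n (fun i => X n i ω)) 0}
        = {ω | ε ≤ ((p n : ℝ) / Real.sqrt n) * Dmax (p n) n (fun i => X n i ω)} := by
    intro n
    ext ω
    simp only [Set.mem_setOf_eq, Real.dist_eq, sub_zero, abs_of_nonneg (hnonneg n ω)]
  set C : ℝ := max M 0 with hC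
  have hSleC : ∀ n : ℕ,
      (⨆ i : Fin n, ∫ ω, ‖(Real.sqrt (p n))⁻¹ • X n i ω‖ ^ q ∂P) ≤ C := by
    intro n
    rcases Nat.eq_zero_or_pos n with hn | hn
    · subst hn
      rw [Real.iSup_of_isEmpty]
      exact le_max_right _ _
    · haveI : Nonempty (Fin n) := Fin.pos_iff_nonempty.mp hn
      exact ciSup_le fun i => (hM n i).trans (le_max_left _ _)
  -- the deterministic upper bound and its convergence
  set u : ℕ → ℝ := fun n =>
    ((n : ℝ) * ((p n : ℝ) ^ (3 * q / 2) / ((n : ℝ) ^ (q / 2) * ε ^ q))) * C with hu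
  have hbound : ∀ n : ℕ,
      P {ω | ε ≤ dist (((p n : ℝ) / Real.sqrt n) * Dmax (p n) n (fun i => X n i ω)) 0}
        ≤ ENNReal.ofReal (u n) := by
    intro n
    rw [hsetdist n]
    refine (key ε hε n).trans (ENNReal.ofReal_le_ofReal ?_)
    have hA : 0 ≤ (n : ℝ) * ((p n : ℝ) ^ (3 * q / 2) / ((n : ℝ) ^ (q / 2) * ε ^ q)) := by
      positivity
    exact mul_le_mul_of_nonneg_left (hSleC n) hA
  have hq2 : q - 2 ≠ 0 := by linarith
  have hutend : Tendsto u atTop (nhds 0) := by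
    have ha : Tendsto (fun n : ℕ =>
        (n : ℝ) * ((p n : ℝ) ^ (3 * q / 2) / (n : ℝ) ^ (q / 2))) atTop (nhds 0) := by
      have hr : Tendsto (fun n : ℕ =>
          ((p n : ℝ) ^ (3 + 6 / (q - 2)) / (n : ℝ)) ^ ((q - 2) / 2)) atTop (nhds 0) := by
        have := hpn.rpow_const (p := (q - 2) / 2) (Or.inr (by linarith))
        rwa [Real.zero_rpow (by positivity : ((q : ℝ) - 2) / 2 ≠ 0)] at this
      refine hr.congr' ?_
      filter_upwards [eventually_ge_atTop 1] with n hn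
      have hnpos : (0 : ℝ) < n := by exact_mod_cast hn
      have hpge : (0 : ℝ) ≤ (p n : ℝ) := Nat.cast_nonneg _
      have hexp : (3 + 6 / (q - 2)) * ((q - 2) / 2) = 3 * q / 2 := by
        field_simp
        ring
      rw [Real.div_rpow (Real.rpow_nonneg hpge _) hnpos.le, ← Real.rpow_mul hpge, hexp]
      have hsplit : (n : ℝ) ^ (q / 2) = (n : ℝ) ^ ((q - 2) / 2) * (n : ℝ) := by
        have hqe : q / 2 = (q - 2) / 2 + 1 := by ring
        rw [hqe, Real.rpow_add hnpos, Real.rpow_one]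
      rw [hsplit]
      have hN : (n : ℝ) ^ ((q - 2) / 2) ≠ 0 := (Real.rpow_pos_of_pos hnpos _).ne'
      field_simp
    have : Tendsto (fun n : ℕ =>
        ((n : ℝ) * ((p n : ℝ) ^ (3 * q / 2) / (n : ℝ) ^ (q / 2))) * ((ε ^ q)⁻¹ * C))
        atTop (nhds 0) := by
      simpa using ha.mul_const ((ε ^ q)⁻¹ * C)
    refine this.congr fun n => ?_
    rw [hu]
    ring
  have hofReal : Tendsto (fun n => ENNReal.ofReal (u n)) atTop (nhds 0) := by
    have := ENNReal.tendsto_ofReal hutend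
    simpa using this
  exact tendsto_of_tendsto_of_tendsto_of_le_of_le tendsto_const_nhds hofReal
    (fun n => zero_le) hbound
end

section
/- Suppose there exist ε > 0 and r < 1 such that P{u^T X_{n,1} > −ε} ≤ r for every unit vector u ∈ ℝ^{p_n} and every n, and there is M < ∞ with |X_{n,i,j}| ≤ M almost surely for all n, i ≤ n, j ≤ p_n. If (p_n log p_n)/n → 0 as n → ∞, then P{0 lies in the interior of the convex hull of {X_{n,1}, …, X_{n,n}} in ℝ^{p_n}} → 1; equivalently, P{EL_n = 0} → 0 (condition (D0)). -/
open MeasureTheory ProbabilityTheory Filter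
open scoped ENNReal NNReal RealInnerProductSpace BigOperators

/-- Empirical likelihood, with the supremum of the empty set equal to `0`. -/
noncomputable def ELval (p n : ℕ) (x : Fin n → EuclideanSpace ℝ (Fin p)) : ℝ :=
  sSup {r : ℝ | ∃ w : Fin n → ℝ, (∀ i, 0 < w i) ∧ ∑ i, w i = 1 ∧
      ∑ i, w i • x i = 0 ∧ r = ∏ i, ((n : ℝ) * w i)}


lemma ball_subset_of_support {p : ℕ} {C : Set (EuclideanSpace ℝ (Fin p))}
    (hconv : Convex ℝ C) (hcl : IsClosed C) (hne : C.Nonempty) {ρ : ℝ} (hρ : 0 < ρ)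
    (h : ∀ u : EuclideanSpace ℝ (Fin p), ‖u‖ = 1 → ∃ y ∈ C, ρ ≤ ⟪u, y⟫) :
    Metric.ball 0 ρ ⊆ C := by
  intro x hx
  by_contra hxC
  obtain ⟨f, u, hfC, hfx⟩ := geometric_hahn_banach_closed_point hconv hcl hxC
  set w := (InnerProductSpace.toDual ℝ (EuclideanSpace ℝ (Fin p))).symm f with hwdef
  have hw : ∀ y, ⟪w, y⟫ = f y := fun y => InnerProductSpace.toDual_symm_apply
  obtain ⟨y0, hy0⟩ := hne
  have hwne : w ≠ 0 := by
    intro h0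
    have h1 : f y0 = f x := by rw [← hw, ← hw, h0]; simp
    linarith [hfC y0 hy0]
  have hwn : 0 < ‖w‖ := norm_pos_iff.mpr hwne
  obtain ⟨y, hyC, hy⟩ := h (‖w‖⁻¹ • w)
    (by rw [norm_smul]; simp [abs_of_pos (inv_pos.mpr hwn), inv_mul_cancel₀ hwn.ne'])
  rw [real_inner_smul_left] at hy
  have h1 : ρ * ‖w‖ ≤ ⟪w, y⟫ := by
    rw [mul_comm]
    calc ‖w‖ * ρ ≤ ‖w‖ * (‖w‖⁻¹ * ⟪w, y⟫) := by
          exact mul_le_mul_of_nonneg_left hy hwn.le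
    _ = ⟪w, y⟫ := by field_simp
  have h2 : f x ≤ ‖w‖ * ‖x‖ := by rw [← hw]; exact real_inner_le_norm w x
  have h3 : ‖x‖ < ρ := by simpa using hx
  have h4 : f y < u := hfC y hyC
  rw [← hw] at h4
  nlinarith [hfx]


lemma ELval_bddAbove (p n : ℕ) (x : Fin n → EuclideanSpace ℝ (Fin p)) :
    ∀ a ∈ {r : ℝ | ∃ w : Fin n → ℝ, (∀ i, 0 < w i) ∧ ∑ i, w i = 1 ∧
      ∑ i, w i • x i = 0 ∧ r = ∏ i, ((n : ℝ) * w i)}, a ≤ 1 := by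
  rintro a ⟨w, hpos, hsum, -, rfl⟩
  rcases Nat.eq_zero_or_pos n with hn | hn
  · subst hn; simp
  have hn' : (0:ℝ) < n := by exact_mod_cast hn
  have key : ∏ i : Fin n, ((n:ℝ) * w i) ^ ((n:ℝ)⁻¹) ≤ ∑ i : Fin n, (n:ℝ)⁻¹ * ((n:ℝ) * w i) := by
    apply Real.geom_mean_le_arith_mean_weighted
    · intro i _; positivity
    · simp only [Finset.sum_const, Finset.card_univ, Fintype.card_fin, nsmul_eq_mul]
      field_simp
    · intro i _; exact (mul_pos hn' (hpos i)).le
  have hsum2 : ∑ i : Fin n, (n:ℝ)⁻¹ * ((n:ℝ) * w i) = 1 := by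
    have heq : ∀ i : Fin n, (n:ℝ)⁻¹ * ((n:ℝ) * w i) = w i := by intro i; field_simp
    simp only [heq, hsum]
  rw [hsum2] at key
  have hprod : ∏ i : Fin n, ((n:ℝ) * w i) ^ ((n:ℝ)⁻¹) =
      (∏ i : Fin n, ((n:ℝ) * w i)) ^ ((n:ℝ)⁻¹) := by
    rw [← Real.finset_prod_rpow]
    intro i _; exact (mul_pos hn' (hpos i)).le
  rw [hprod] at key
  have hP : (0:ℝ) < ∏ i : Fin n, ((n:ℝ) * w i) := by
    apply Finset.prod_pos; intro i _; exact mul_pos hn' (hpos i)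
  by_contra hcon
  push_neg at hcon
  have : (1:ℝ) < (∏ i : Fin n, ((n:ℝ) * w i)) ^ ((n:ℝ)⁻¹) := by
    apply Real.one_lt_rpow_iff_of_pos hP |>.mpr
    exact Or.inl ⟨hcon, by positivity⟩
  linarith

lemma ELval_pos {p n : ℕ} (hn : 0 < n) (x : Fin n → EuclideanSpace ℝ (Fin p)) {ρ : ℝ}
    (hρ : 0 < ρ) (h : Metric.ball 0 ρ ⊆ convexHull ℝ (Set.range x)) :
    0 < ELval p n x := by
  have hn' : (0:ℝ) < n := by exact_mod_cast hn
  set c : EuclideanSpace ℝ (Fin p) := (n:ℝ)⁻¹ • ∑ i, x i with hc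
  set t : ℝ := ρ / (2 * (‖c‖ + 1)) with htdef
  have hcn : (0:ℝ) < ‖c‖ + 1 := by positivity
  have ht : 0 < t := by positivity
  have hyb : ‖-(t • c)‖ < ρ := by
    rw [norm_neg, norm_smul, Real.norm_eq_abs, abs_of_pos ht]
    have h1 : t * (‖c‖ + 1) = ρ / 2 := by rw [htdef]; field_simp
    nlinarith [norm_nonneg c]
  have hymem : -(t • c) ∈ convexHull ℝ (Set.range x) :=
    h (by simpa [Metric.mem_ball] using hyb)
  rw [convexHull_range_eq_exists_affineCombination] at hymem
  obtain ⟨s, w, hw0, hw1, haff⟩ := hymem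
  rw [Finset.affineCombination_eq_linear_combination s x w hw1] at haff
  -- extended weights
  set wt : Fin n → ℝ := fun i => if i ∈ s then w i else 0 with hwt
  have hwtsum : ∑ i, wt i = 1 := by
    rw [hwt]; simp only [Finset.sum_ite_mem, Finset.univ_inter]; exact hw1
  have hwtcomb : ∑ i, wt i • x i = -(t • c) := by
    rw [hwt]
    simp only [ite_smul, zero_smul]
    rw [Finset.sum_ite_mem, Finset.univ_inter]; exact haff
  set W : Fin n → ℝ := fun i => (wt i + t / n) / (1 + t) with hW
  have hwtnn : ∀ i, 0 ≤ wt i := fun i => by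
    by_cases hi : i ∈ s
    · simpa [hwt, hi] using hw0 _ hi
    · simp [hwt, hi]
  have hWpos : ∀ i, 0 < W i := fun i => by
    have h1 := hwtnn i
    rw [hW]; dsimp only; positivity
  have hWsum : ∑ i, W i = 1 := by
    rw [hW]; dsimp only
    rw [← Finset.sum_div, Finset.sum_add_distrib, hwtsum, Finset.sum_const,
      Finset.card_univ, Fintype.card_fin, nsmul_eq_mul]
    field_simp
  have hWcomb : ∑ i, W i • x i = 0 := by
    have hstep : ∀ i, W i • x i = (1 + t)⁻¹ • ((wt i + t / n) • x i) := by
      intro i; rw [hW]; dsimp only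
      rw [div_eq_inv_mul, mul_smul]
    simp only [hstep]
    rw [← Finset.smul_sum]
    have h2 : ∑ i, (wt i + t / n) • x i = 0 := by
      have h3 : ∑ i, (wt i + t / n) • x i = (∑ i, wt i • x i) + (t / n) • ∑ i, x i := by
        rw [Finset.smul_sum, ← Finset.sum_add_distrib]
        congr 1; ext i; rw [add_smul]
      rw [h3, hwtcomb]
      have h4 : (t / n) • ∑ i, x i = t • c := by
        rw [hc, div_eq_mul_inv, mul_smul]
      rw [h4]; abel
    rw [h2, smul_zero]
  have hmem : (∏ i, ((n : ℝ) * W i)) ∈ {r : ℝ | ∃ w : Fin n → ℝ, (∀ i, 0 < w i) ∧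
      ∑ i, w i = 1 ∧ ∑ i, w i • x i = 0 ∧ r = ∏ i, ((n : ℝ) * w i)} :=
    ⟨W, hWpos, hWsum, hWcomb, rfl⟩
  have hpos : 0 < ∏ i, ((n : ℝ) * W i) := Finset.prod_pos fun i _ =>
    mul_pos hn' (hWpos i)
  have hle : ∏ i, ((n : ℝ) * W i) ≤ ELval p n x :=
    le_csSup ⟨1, ELval_bddAbove p n x⟩ hmem
  linarith


lemma exists_net (p : ℕ) {δ : ℝ} (hδ : 0 < δ) :
    ∃ T : Finset (EuclideanSpace ℝ (Fin p)),
      (T.card : ℝ) ≤ (2 * Real.sqrt p / δ + 5) ^ p ∧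
      ∀ u : EuclideanSpace ℝ (Fin p), ‖u‖ = 1 → ∃ v ∈ T, ‖u - v‖ ≤ δ := by
  classical
  rcases Nat.eq_zero_or_pos p with hp | hp
  · subst hp
    refine ⟨∅, by simp, ?_⟩
    intro u hu
    exfalso
    have : ‖u‖ = 0 := by
      rw [EuclideanSpace.norm_eq]; simp
    rw [hu] at this; norm_num at this
  have hsp : 0 < Real.sqrt p := Real.sqrt_pos.mpr (by exact_mod_cast hp)
  set δ0 : ℝ := δ / Real.sqrt p with hδ0def
  have hδ0 : 0 < δ0 := by positivity
  set K : ℕ := ⌈1 / δ0⌉₊ + 1 with hK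
  set G : Finset ℝ := (Finset.Icc (-(K:ℤ)) (K:ℤ)).image (fun z : ℤ => δ0 * z) with hG
  set T : Finset (EuclideanSpace ℝ (Fin p)) :=
    (Fintype.piFinset (fun _ : Fin p => G)).image
      (WithLp.equiv 2 (Fin p → ℝ)).symm with hT
  refine ⟨T, ?_, ?_⟩
  · -- cardinality
    have h1 : T.card ≤ (2 * K + 1) ^ p := by
      calc T.card ≤ (Fintype.piFinset (fun _ : Fin p => G)).card := Finset.card_image_le
      _ = ∏ _i : Fin p, G.card := Fintype.card_piFinset _
      _ ≤ ∏ _i : Fin p, (2 * K + 1) := by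
          apply Finset.prod_le_prod' 
          intro i _
          calc G.card ≤ (Finset.Icc (-(K:ℤ)) (K:ℤ)).card := Finset.card_image_le
          _ = 2 * K + 1 := by
              rw [Int.card_Icc]; omega
      _ = (2 * K + 1) ^ p := by rw [Finset.prod_const, Finset.card_univ, Fintype.card_fin]
    have h2 : ((2 * K + 1 : ℕ) : ℝ) ≤ 2 * Real.sqrt p / δ + 5 := by
      have hceil : (⌈1 / δ0⌉₊ : ℝ) < 1 / δ0 + 1 :=
        Nat.ceil_lt_add_one (by positivity)
      have h3 : 2 * Real.sqrt p / δ = 2 * (1 / δ0) := by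
        rw [hδ0def, one_div_div]; ring
      rw [h3, hK]
      push_cast
      linarith
    calc (T.card : ℝ) ≤ (((2 * K + 1) ^ p : ℕ) : ℝ) := by exact_mod_cast h1
    _ = ((2 * K + 1 : ℕ) : ℝ) ^ p := by push_cast; ring
    _ ≤ (2 * Real.sqrt p / δ + 5) ^ p := pow_le_pow_left₀ (by positivity) h2 p
  · -- covering
    intro u hu
    have hcoord : ∀ j, |u j| ≤ 1 := by
      intro j
      have h1 : (u j)^2 ≤ ∑ i, (u i)^2 := by
        apply Finset.single_le_sum (f := fun i => (u i)^2)
        · intro i _; positivity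
        · exact Finset.mem_univ j
      have h2 : Real.sqrt ((u j)^2) ≤ Real.sqrt (∑ i, (u i)^2) := Real.sqrt_le_sqrt h1
      rw [Real.sqrt_sq_eq_abs] at h2
      have h3 : Real.sqrt (∑ i, (u i)^2) = ‖u‖ := by
        rw [EuclideanSpace.norm_eq]
        congr 1
        exact Finset.sum_congr rfl fun i _ => (sq_abs _).symm
      rw [h3, hu] at h2; exact h2
    set z : Fin p → ℤ := fun j => ⌊u j / δ0⌋ with hz
    set v0 : Fin p → ℝ := fun j => δ0 * z j with hv0
    have hKr : (1:ℝ) / δ0 + 1 ≤ (K:ℝ) := by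
      rw [hK]; push_cast
      have := Nat.le_ceil (1 / δ0)
      linarith
    have hzmem : ∀ j, z j ∈ Finset.Icc (-(K:ℤ)) (K:ℤ) := by
      intro j
      rw [Finset.mem_Icc]
      have habs := abs_le.mp (hcoord j)
      have hub : (z j : ℝ) ≤ (K : ℝ) := by
        have h4 : (z j : ℝ) ≤ u j / δ0 := Int.floor_le _
        have h5 : u j / δ0 ≤ 1 / δ0 := by gcongr; exact habs.2
        linarith
      have hlb : (-(K:ℤ) : ℝ) ≤ (z j : ℝ) := by
        have h4 : u j / δ0 - 1 < (z j : ℝ) := Int.sub_one_lt_floor _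
        have h5 : -(1 / δ0) ≤ u j / δ0 := by
          rw [← neg_div]
          gcongr
          exact habs.1
        have hle : (1:ℝ)/δ0 ≤ (⌈1/δ0⌉₊ : ℝ) := Nat.le_ceil _
        rw [hK]
        push_cast
        linarith
      constructor
      · exact_mod_cast hlb
      · exact_mod_cast hub
    have hv0mem : v0 ∈ Fintype.piFinset (fun _ : Fin p => G) := by
      rw [Fintype.mem_piFinset]
      intro j
      rw [hG, Finset.mem_image]
      exact ⟨z j, hzmem j, rfl⟩
    refine ⟨(WithLp.equiv 2 (Fin p → ℝ)).symm v0, Finset.mem_image_of_mem _ hv0mem, ?_⟩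
    have hcd : ∀ j, |u j - v0 j| ≤ δ0 := by
      intro j
      have h4 : (z j : ℝ) ≤ u j / δ0 := Int.floor_le _
      have h5 : u j / δ0 - 1 < (z j : ℝ) := Int.sub_one_lt_floor _
      rw [hv0]
      dsimp only
      rw [abs_le]
      constructor
      · have := mul_le_mul_of_nonneg_left (sub_le_iff_le_add.mp h5.le) hδ0.le
        have h6 : δ0 * (u j / δ0) = u j := by field_simp
        nlinarith
      · have := mul_le_mul_of_nonneg_left h4 hδ0.le
        have h6 : δ0 * (u j / δ0) = u j := by field_simp
        nlinarith
    have hnorm : ‖u - (WithLp.equiv 2 (Fin p → ℝ)).symm v0‖ =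
        Real.sqrt (∑ j, (u j - v0 j)^2) := by
      rw [EuclideanSpace.norm_eq]
      congr 1
      apply Finset.sum_congr rfl
      intro j _
      have he : (u - (WithLp.equiv 2 (Fin p → ℝ)).symm v0) j = u j - v0 j := rfl
      rw [he, Real.norm_eq_abs, sq_abs]
    rw [hnorm]
    have hsum : ∑ j, (u j - v0 j)^2 ≤ (p : ℝ) * δ0^2 := by
      calc ∑ j, (u j - v0 j)^2 ≤ ∑ _j : Fin p, δ0^2 := by
            apply Finset.sum_le_sum
            intro j _
            have := hcd j
            nlinarith [abs_nonneg (u j - v0 j), sq_abs (u j - v0 j)]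
      _ = (p : ℝ) * δ0^2 := by
            rw [Finset.sum_const, Finset.card_univ, Fintype.card_fin, nsmul_eq_mul]
    calc Real.sqrt (∑ j, (u j - v0 j)^2) ≤ Real.sqrt ((p:ℝ) * δ0^2) := Real.sqrt_le_sqrt hsum
    _ = Real.sqrt p * δ0 := by
        rw [Real.sqrt_mul (by positivity), Real.sqrt_sq hδ0.le]
    _ = δ := by
        rw [hδ0def]
        field_simp


lemma tendsto_bound (p : ℕ → ℕ)
    (hgrowth : Tendsto (fun n => (p n : ℝ) * Real.log (p n) / (n : ℝ)) atTop (nhds 0))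
    (C : ℝ) (hC : 1 ≤ C) {r' : ℝ} (hr0 : 0 < r') (hr1 : r' < 1) :
    Tendsto (fun n => (C * ((p n : ℝ) + 1)) ^ (p n) * r' ^ n) atTop (nhds 0) := by
  have hl2 : 0 < Real.log 2 := Real.log_pos (by norm_num)
  -- Step 1 : p/n → 0
  have hpn : Tendsto (fun n : ℕ => (p n : ℝ) / n) atTop (nhds 0) := by
    have hnat : ∀ m : ℕ, (m:ℝ) ≤ 1 + (m:ℝ) * Real.log m / Real.log 2 := by
      intro m
      rcases Nat.lt_or_ge m 2 with hm | hm
      · interval_cases m <;> simp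
      · have hm2 : (2:ℝ) ≤ (m:ℝ) := by exact_mod_cast hm
        have h2 : Real.log 2 ≤ Real.log m := Real.log_le_log (by norm_num) hm2
        have h3 : (m:ℝ) ≤ (m:ℝ) * Real.log m / Real.log 2 := by
          rw [le_div_iff₀ hl2]; nlinarith
        linarith
    apply squeeze_zero' (Eventually.of_forall fun n => by positivity)
      (g := fun n : ℕ => 1 / (n:ℝ) + ((p n : ℝ) * Real.log (p n) / n) / Real.log 2)
    · filter_upwards [eventually_ge_atTop 1] with n hn
      have hn' : (0:ℝ) < n := by exact_mod_cast hn
      have h3 := mul_le_mul_of_nonneg_right (hnat (p n)) (by positivity : (0:ℝ) ≤ (n:ℝ)⁻¹)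
      calc (p n : ℝ)/n = (p n : ℝ) * (n:ℝ)⁻¹ := by rw [div_eq_mul_inv]
      _ ≤ (1 + (p n : ℝ) * Real.log (p n) / Real.log 2) * (n:ℝ)⁻¹ := h3
      _ = 1 / (n:ℝ) + ((p n : ℝ) * Real.log (p n) / n) / Real.log 2 := by ring
    · have h1 := tendsto_one_div_atTop_nhds_zero_nat (𝕜 := ℝ)
      have h2 := hgrowth.div_const (Real.log 2)
      have := h1.add h2
      simpa using this
  -- Step 2 : p log(p+1) / n → 0
  have hplog : Tendsto (fun n : ℕ => (p n : ℝ) * Real.log ((p n : ℝ) + 1) / n)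
      atTop (nhds 0) := by
    have hnat : ∀ m : ℕ, (m:ℝ) * Real.log ((m:ℝ)+1) ≤ (m:ℝ)*Real.log m + (m:ℝ)*Real.log 2 := by
      intro m
      rcases Nat.eq_zero_or_pos m with hm | hm
      · subst hm; simp
      · have hm1 : (1:ℝ) ≤ (m:ℝ) := by exact_mod_cast hm
        have h2 : Real.log ((m:ℝ)+1) ≤ Real.log (2*m) :=
          Real.log_le_log (by linarith) (by linarith)
        have h3 : Real.log (2*(m:ℝ)) = Real.log 2 + Real.log m :=
          Real.log_mul (by norm_num) (by linarith)
        have hm0 : (0:ℝ) ≤ m := by linarith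
        nlinarith
    apply squeeze_zero' (Eventually.of_forall fun n : ℕ => by
        have hc : (0:ℝ) ≤ (p n : ℝ) := Nat.cast_nonneg _
        have h0 : (0:ℝ) ≤ Real.log ((p n : ℝ)+1) := Real.log_nonneg (by linarith)
        exact div_nonneg (mul_nonneg hc h0) (Nat.cast_nonneg n))
      (g := fun n : ℕ => (p n : ℝ) * Real.log (p n) / n + Real.log 2 * ((p n : ℝ) / n))
    · filter_upwards [eventually_ge_atTop 1] with n hn
      have hn' : (0:ℝ) < n := by exact_mod_cast hn
      have h1 := hnat (p n)
      calc (p n : ℝ) * Real.log ((p n:ℝ)+1) / n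
          = ((p n : ℝ) * Real.log ((p n:ℝ)+1)) * (n:ℝ)⁻¹ := by rw [div_eq_mul_inv]
      _ ≤ ((p n : ℝ)*Real.log (p n) + (p n:ℝ)*Real.log 2) * (n:ℝ)⁻¹ :=
            mul_le_mul_of_nonneg_right h1 (by positivity)
      _ = (p n : ℝ) * Real.log (p n) / n + Real.log 2 * ((p n : ℝ) / n) := by ring
    · have := hgrowth.add (tendsto_const_nhds (x := Real.log 2) |>.mul hpn)
      simpa using this
  -- Step 3 : p log(C(p+1))/n → 0
  have htot : Tendsto (fun n : ℕ => (p n : ℝ) * Real.log (C * ((p n : ℝ)+1)) / n)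
      atTop (nhds 0) := by
    have heq : ∀ n : ℕ, (p n : ℝ) * Real.log (C * ((p n : ℝ)+1)) / n
        = Real.log C * ((p n : ℝ)/n) + (p n : ℝ) * Real.log ((p n : ℝ)+1) / n := by
      intro n
      rw [Real.log_mul (by linarith) (by positivity)]
      ring
    have h := (tendsto_const_nhds (x := Real.log C) |>.mul hpn).add hplog
    simp only [mul_zero, add_zero] at h
    exact h.congr fun n => (heq n).symm
  -- Step 4 : exponent → -∞
  have hlr : Real.log r' < 0 := Real.log_neg hr0 hr1
  have hexpo : Tendsto (fun n : ℕ => (n:ℝ) * ((p n : ℝ) * Real.log (C * ((p n : ℝ)+1)) / n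
      + Real.log r')) atTop atBot := by
    apply Filter.Tendsto.atTop_mul_neg (C := Real.log r') hlr
      tendsto_natCast_atTop_atTop
    have := htot.add (tendsto_const_nhds (x := Real.log r'))
    simpa using this
  -- Step 5 : conclude
  have hcomp := Real.tendsto_exp_atBot.comp hexpo
  apply hcomp.congr'
  filter_upwards [eventually_ge_atTop 1] with n hn
  have hn' : (0:ℝ) < n := by exact_mod_cast hn
  have hCp : (0:ℝ) < C * ((p n : ℝ)+1) := by positivity
  simp only [Function.comp_apply]
  rw [mul_add, mul_div_cancel₀ _ hn'.ne', Real.exp_add]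
  rw [show (p n : ℝ) * Real.log (C * ((p n:ℝ)+1)) = Real.log ((C * ((p n:ℝ)+1)) ^ (p n)) by
      rw [Real.log_pow]]
  rw [show (n:ℝ) * Real.log r' = Real.log (r' ^ n) by rw [Real.log_pow]]
  rw [Real.exp_log (by positivity), Real.exp_log (by positivity)]

set_option maxHeartbeats 1000000 in
lemma key_lemma {Ω : Type*} [MeasurableSpace Ω] (P : Measure Ω) [IsProbabilityMeasure P]
    (q n : ℕ) (hn : 1 ≤ n) (Y : Fin n → Ω → EuclideanSpace ℝ (Fin q))
    (hYmeas : ∀ i, Measurable (Y i))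
    (hindep : iIndepFun Y P)
    (ε r M' : ℝ) (hε : 0 < ε) (hM'1 : 1 ≤ M')
    (hdir : ∀ (i : Fin n) (u : EuclideanSpace ℝ (Fin q)), ‖u‖ = 1 →
      P {ω | -ε < ⟪u, Y i ω⟫} ≤ ENNReal.ofReal r)
    (hbdd : ∀ (i : Fin n) (j : Fin q), ∀ᵐ ω ∂P, |Y i ω j| ≤ M') :
    ∃ G B : Set Ω, MeasurableSet G ∧ P Bᶜ = 0 ∧
      (G ∩ B ⊆ {ω | (0 : EuclideanSpace ℝ (Fin q))
        ∈ interior (convexHull ℝ (Set.range fun i : Fin n => Y i ω))}) ∧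
      (G ∩ B ⊆ {ω | ELval q n (fun i => Y i ω) ≠ 0}) ∧
      P Gᶜ ≤ ENNReal.ofReal (((4*(2*ε+4*M')/ε + 5) * ((q : ℝ)+1)) ^ q *
        (max r (1/2)) ^ n) := by
  classical
  have hM'0 : (0:ℝ) < M' := lt_of_lt_of_le one_pos hM'1
  set r' : ℝ := max r (1/2) with hr'def
  have hr'0 : (0:ℝ) < r' := lt_of_lt_of_le (by norm_num) (le_max_right _ _)
  set Cst : ℝ := 4 * (2*ε + 4*M') / ε + 5 with hCstdef
  have hq0 : (0:ℝ) ≤ (q : ℝ) := Nat.cast_nonneg _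
  have hsq0 : (0:ℝ) ≤ Real.sqrt q := Real.sqrt_nonneg _
  have hsq : Real.sqrt q * Real.sqrt q = (q : ℝ) :=
    Real.mul_self_sqrt hq0
  have hden : (0:ℝ) < (2*ε + 4*M') * (Real.sqrt q + 1) := by positivity
  set δ : ℝ := ε / ((2*ε + 4*M') * (Real.sqrt q + 1)) with hδdef
  have hδpos : 0 < δ := div_pos hε hden
  have hδhalf : δ ≤ 1/2 := by
    rw [hδdef, div_le_iff₀ hden]
    nlinarith
  have hδM : δ * (M' * Real.sqrt q) ≤ ε/4 := by
    rw [hδdef, div_mul_eq_mul_div, div_le_div_iff₀ hden (by norm_num : (0:ℝ) < 4)]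
    nlinarith [mul_nonneg (mul_nonneg hε.le hε.le) hsq0, mul_nonneg hε.le hε.le,
      mul_nonneg hε.le hM'0.le]
  obtain ⟨T, hTcard, hTnet⟩ := exists_net q hδpos
  set T' : Finset (EuclideanSpace ℝ (Fin q)) :=
    T.filter (fun v => 1/2 ≤ ‖v‖) with hT'def
  set A : EuclideanSpace ℝ (Fin q) → Fin n → Set Ω :=
    fun v i => {ω | ⟪v, Y i ω⟫ < ε/2} with hAdef
  have hAmeas : ∀ v i, MeasurableSet (A v i) := by
    intro v i
    exact measurableSet_lt (measurable_const.inner (hYmeas i)) measurable_const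
  set G : Set Ω := ⋂ v ∈ T', ⋃ i : Fin n, (A v i)ᶜ with hGdef
  set B : Set Ω := ⋂ i : Fin n, ⋂ j : Fin q, {ω | |Y i ω j| ≤ M'} with hBdef
  have hGmeas : MeasurableSet G := by
    apply MeasurableSet.biInter T'.countable_toSet
    intro v _
    exact MeasurableSet.iUnion fun i => (hAmeas v i).compl
  have hBnull : P Bᶜ = 0 := by
    rw [hBdef]
    simp only [Set.compl_iInter]
    refine measure_iUnion_null fun i => measure_iUnion_null fun j => ?_
    have h1 := hbdd i j
    rw [MeasureTheory.ae_iff] at h1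
    simpa [Set.compl_setOf, not_le] using h1
  -- probability bound
  have hPG : P Gᶜ ≤ ENNReal.ofReal ((Cst * ((q : ℝ)+1)) ^ q * r' ^ n) := by
    have hGc : Gᶜ = ⋃ v ∈ T', ⋂ i : Fin n, A v i := by
      rw [hGdef]
      simp only [Set.compl_iInter, Set.compl_iUnion, compl_compl]
    have hstep : ∀ v ∈ T', P (⋂ i : Fin n, A v i) ≤ (ENNReal.ofReal r') ^ n := by
      intro v hv
      rw [hT'def, Finset.mem_filter] at hv
      have hvn : (1:ℝ)/2 ≤ ‖v‖ := hv.2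
      have hvpos : (0:ℝ) < ‖v‖ := lt_of_lt_of_le (by norm_num) hvn
      have hprod : P (⋂ i : Fin n, A v i) = ∏ i : Fin n, P (A v i) := by
        apply hindep.meas_iInter
        intro i
        exact ⟨{x | ⟪v, x⟫ < ε/2},
          measurableSet_lt ((Continuous.inner continuous_const continuous_id).measurable)
            measurable_const, rfl⟩
      have honeA : ∀ i : Fin n, P (A v i) ≤ ENNReal.ofReal r' := by
        intro i
        set u0 : EuclideanSpace ℝ (Fin q) := -(‖v‖⁻¹ • v) with hu0def
        have hu0 : ‖u0‖ = 1 := by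
          rw [hu0def, norm_neg, norm_smul, Real.norm_eq_abs,
            abs_of_pos (inv_pos.mpr hvpos), inv_mul_cancel₀ hvpos.ne']
        have hsub : A v i ⊆ {ω | -ε < ⟪u0, Y i ω⟫} := by
          intro ω hω
          have ht : ⟪v, Y i ω⟫ < ε/2 := hω
          have hinner : ⟪u0, Y i ω⟫ = -(‖v‖⁻¹ * ⟪v, Y i ω⟫) := by
            rw [hu0def, inner_neg_left, real_inner_smul_left]
          have hc2 : ‖v‖⁻¹ ≤ 2 := by
            rw [inv_le_comm₀ (by positivity) (by norm_num)]
            linarith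
          have hc0 : (0:ℝ) < ‖v‖⁻¹ := inv_pos.mpr hvpos
          show -ε < ⟪u0, Y i ω⟫
          rw [hinner]
          nlinarith
        calc P (A v i) ≤ P {ω | -ε < ⟪u0, Y i ω⟫} := measure_mono hsub
        _ ≤ ENNReal.ofReal r := hdir i u0 hu0
        _ ≤ ENNReal.ofReal r' := ENNReal.ofReal_le_ofReal (le_max_left _ _)
      rw [hprod]
      calc ∏ i : Fin n, P (A v i) ≤ ∏ _i : Fin n, ENNReal.ofReal r' :=
            Finset.prod_le_prod' fun i _ => honeA i
      _ = (ENNReal.ofReal r') ^ n := by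
            rw [Finset.prod_const, Finset.card_univ, Fintype.card_fin]
    have hcard : (T'.card : ℝ) ≤ (Cst * ((q : ℝ)+1)) ^ q := by
      have h1 : (T'.card : ℝ) ≤ (T.card : ℝ) := by
        exact_mod_cast Finset.card_le_card (Finset.filter_subset _ _)
      have h2 : 2 * Real.sqrt q / δ + 5 ≤ Cst * ((q : ℝ) + 1) := by
        rw [hδdef, div_div_eq_mul_div, hCstdef]
        have hD : (0:ℝ) < 2*ε + 4*M' := by linarith
        have h2sq : 2 * Real.sqrt q ≤ (q : ℝ) + 1 := by
          nlinarith [sq_nonneg (Real.sqrt q - 1)]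
        have t1 : 2 * Real.sqrt q * ((2*ε + 4*M') * (Real.sqrt q + 1)) + 5*ε
            ≤ (4*(2*ε+4*M') + 5*ε) * ((q : ℝ) + 1) := by
          nlinarith [mul_nonneg hD.le
              (by linarith : (0:ℝ) ≤ (q : ℝ) + 2 - Real.sqrt q),
            mul_nonneg hε.le hq0]
        rw [div_add' _ _ _ hε.ne', div_add' _ _ _ hε.ne', div_mul_eq_mul_div,
          div_le_div_iff₀ hε hε]
        exact mul_le_mul_of_nonneg_right t1 hε.le
      calc (T'.card : ℝ) ≤ (2 * Real.sqrt q / δ + 5) ^ q := h1.trans hTcard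
      _ ≤ (Cst * ((q : ℝ)+1)) ^ q := by
          apply pow_le_pow_left₀ (by positivity) h2
    calc P Gᶜ ≤ ∑ v ∈ T', P (⋂ i : Fin n, A v i) := by
          rw [hGc]; exact measure_biUnion_finset_le _ _
    _ ≤ ∑ _v ∈ T', (ENNReal.ofReal r') ^ n := Finset.sum_le_sum hstep
    _ = (T'.card : ℝ≥0∞) * (ENNReal.ofReal r') ^ n := by
          rw [Finset.sum_const, nsmul_eq_mul]
    _ ≤ ENNReal.ofReal ((Cst * ((q : ℝ)+1)) ^ q) * (ENNReal.ofReal r') ^ n := by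
          gcongr
          calc (T'.card : ℝ≥0∞) = ENNReal.ofReal (T'.card : ℝ) := by
                rw [ENNReal.ofReal_natCast]
          _ ≤ ENNReal.ofReal ((Cst * ((q : ℝ)+1)) ^ q) :=
                ENNReal.ofReal_le_ofReal hcard
    _ = ENNReal.ofReal ((Cst * ((q : ℝ)+1)) ^ q * r' ^ n) := by
          rw [← ENNReal.ofReal_pow hr'0.le, ← ENNReal.ofReal_mul (by positivity)]
  -- the good event implies the geometric conclusions
  have main : ∀ ω ∈ G ∩ B,
      ((0 : EuclideanSpace ℝ (Fin q))
        ∈ interior (convexHull ℝ (Set.range fun i : Fin n => Y i ω))) ∧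
      ELval q n (fun i => Y i ω) ≠ 0 := by
    intro ω hω
    obtain ⟨hωG, hωB⟩ := hω
    have hXb : ∀ i : Fin n, ‖Y i ω‖ ≤ M' * Real.sqrt q := by
      intro i
      have hcoord : ∀ j, |Y i ω j| ≤ M' := by
        intro j
        have := Set.mem_iInter.mp (Set.mem_iInter.mp hωB i) j
        exact this
      rw [EuclideanSpace.norm_eq]
      have hsumle : ∑ j, ‖Y i ω j‖^2 ≤ (q : ℝ) * M'^2 := by
        calc ∑ j, ‖Y i ω j‖^2 ≤ ∑ _j : Fin q, M'^2 := by
              apply Finset.sum_le_sum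
              intro j _
              rw [Real.norm_eq_abs]
              nlinarith [hcoord j, abs_nonneg (Y i ω j)]
        _ = (q : ℝ) * M'^2 := by
              rw [Finset.sum_const, Finset.card_univ, Fintype.card_fin, nsmul_eq_mul]
      calc Real.sqrt (∑ j, ‖Y i ω j‖^2) ≤ Real.sqrt ((q : ℝ) * M'^2) :=
            Real.sqrt_le_sqrt hsumle
      _ = Real.sqrt q * M' := by
            rw [Real.sqrt_mul hq0, Real.sqrt_sq hM'0.le]
      _ = M' * Real.sqrt q := mul_comm _ _
    have hsupport : ∀ u : EuclideanSpace ℝ (Fin q), ‖u‖ = 1 →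
        ∃ i : Fin n, ε/4 ≤ ⟪u, Y i ω⟫ := by
      intro u hu
      obtain ⟨v, hvT, hvd⟩ := hTnet u hu
      have hvn : (1:ℝ)/2 ≤ ‖v‖ := by
        have h1 : ‖u‖ - ‖v‖ ≤ ‖u - v‖ := norm_sub_norm_le u v
        rw [hu] at h1
        linarith
      have hvT' : v ∈ T' := by
        rw [hT'def, Finset.mem_filter]
        exact ⟨hvT, hvn⟩
      have hωG2 := Set.mem_iInter₂.mp hωG v hvT'
      obtain ⟨i, hi⟩ := Set.mem_iUnion.mp hωG2
      have hi2 : ε/2 ≤ ⟪v, Y i ω⟫ := not_lt.mp hi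
      refine ⟨i, ?_⟩
      have hsplit : ⟪u - v, Y i ω⟫ = ⟪u, Y i ω⟫ - ⟪v, Y i ω⟫ :=
        inner_sub_left _ _ _
      have habs : |⟪u - v, Y i ω⟫| ≤ ‖u - v‖ * ‖Y i ω‖ :=
        abs_real_inner_le_norm _ _
      have hnm : ‖u - v‖ * ‖Y i ω‖ ≤ δ * (M' * Real.sqrt q) := by
        apply mul_le_mul hvd (hXb i) (norm_nonneg _) hδpos.le
      have := abs_le.mp habs
      linarith
    set S : Set (EuclideanSpace ℝ (Fin q)) :=
      Set.range fun i : Fin n => Y i ω with hSdef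
    have hi0 : (0:ℕ) < n := hn
    have hSne : (convexHull ℝ S).Nonempty :=
      ⟨Y ⟨0, hi0⟩ ω, subset_convexHull ℝ S ⟨⟨0, hi0⟩, rfl⟩⟩
    have hball : Metric.ball 0 (ε/4) ⊆ convexHull ℝ S := by
      apply ball_subset_of_support (convex_convexHull ℝ S)
        ((Set.finite_range _).isClosed_convexHull (𝕜 := ℝ)) hSne (by positivity)
      intro u hu
      obtain ⟨i, hi⟩ := hsupport u hu
      exact ⟨Y i ω, subset_convexHull ℝ S ⟨i, rfl⟩, hi⟩
    constructor
    · exact interior_maximal hball Metric.isOpen_ball (Metric.mem_ball_self (by positivity))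
    · exact (ELval_pos hi0 _ (by positivity) hball).ne'
  exact ⟨G, B, hGmeas, hBnull, fun ω hω => (main ω hω).1, fun ω hω => (main ω hω).2, hPG⟩

/-- **Lemma 4.2(a).**
Triangular array of i.i.d. random vectors in `ℝ^{pₙ}`.  Suppose there exist `ε > 0`
and `r < 1` such that `P{uᵀ X_{n,1} > −ε} ≤ r` for every unit vector `u` and every
`n`, and the components `|X_{n,i,j}|` are uniformly bounded.  If `(pₙ log pₙ)/n → 0`,
then the probability that `0` lies in the interior of the convex hull of
`{X_{n,1}, …, X_{n,n}}` tends to one; equivalently, `P{ELₙ = 0} → 0`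
(condition (D0)). -/
theorem zero_in_convex_hull_bounded_case
    {Ω : Type*} [MeasurableSpace Ω] (P : Measure Ω) [IsProbabilityMeasure P]
    (p : ℕ → ℕ)
    (X : (n : ℕ) → Fin n → Ω → EuclideanSpace ℝ (Fin (p n)))
    (hXmeas : ∀ n i, Measurable (X n i))
    (hindep : ∀ n, iIndepFun (X n) P)
    (hident : ∀ n, ∀ i j : Fin n, IdentDistrib (X n i) (X n j) P P)
    (ε r : ℝ) (hε : 0 < ε) (hr : r < 1)
    (hdir : ∀ n (i : Fin n) (u : EuclideanSpace ℝ (Fin (p n))), ‖u‖ = 1 →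
      P {ω | -ε < ⟪u, X n i ω⟫} ≤ ENNReal.ofReal r)
    (M : ℝ)
    (hbdd : ∀ n (i : Fin n) (j : Fin (p n)), ∀ᵐ ω ∂P, |X n i ω j| ≤ M)
    (hgrowth : Tendsto (fun n => (p n : ℝ) * Real.log (p n) / (n : ℝ))
      atTop (nhds 0)) :
    Tendsto (fun n => P {ω | (0 : EuclideanSpace ℝ (Fin (p n)))
        ∈ interior (convexHull ℝ (Set.range fun i : Fin n => X n i ω))})
      atTop (nhds 1)
    ∧ Tendsto (fun n => P {ω | ELval (p n) n (fun i => X n i ω) = 0})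
      atTop (nhds 0) := by
  classical
  have hM'1 : (1:ℝ) ≤ max M 1 := le_max_right _ _
  have hM'0 : (0:ℝ) < max M 1 := lt_of_lt_of_le one_pos hM'1
  have hr'0 : (0:ℝ) < max r (1/2) := lt_of_lt_of_le (by norm_num) (le_max_right _ _)
  have hr'1 : max r (1/2) < 1 := max_lt hr (by norm_num)
  have hCst1 : (1:ℝ) ≤ 4*(2*ε+4*(max M 1))/ε + 5 := by
    have h1 : (0:ℝ) ≤ 4*(2*ε+4*(max M 1))/ε := div_nonneg (by nlinarith) hε.le
    linarith
  have key := fun (n : ℕ) (hn : 1 ≤ n) =>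
    key_lemma P (p n) n hn (X n) (hXmeas n) (hindep n) ε r (max M 1) hε hM'1
      (hdir n) (fun i j => (hbdd n i j).mono fun ω h => le_trans h (le_max_left _ _))
  have hbnd0 : Tendsto (fun n => ENNReal.ofReal (((4*(2*ε+4*(max M 1))/ε + 5) * ((p n : ℝ)+1)) ^ (p n) * (max r (1/2)) ^ n)) atTop (nhds 0) := by
    have h1 := tendsto_bound p hgrowth _ hCst1 hr'0 hr'1
    have h2 := ENNReal.tendsto_ofReal (f := atTop) h1
    simpa using h2
  constructor
  · have hlow : Tendsto (fun n => 1 - ENNReal.ofReal (((4*(2*ε+4*(max M 1))/ε + 5) * ((p n : ℝ)+1)) ^ (p n) * (max r (1/2)) ^ n)) atTop (nhds 1) := by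
      have h3 := ENNReal.Tendsto.sub (tendsto_const_nhds (x := (1:ℝ≥0∞))) hbnd0
        (Or.inl ENNReal.one_ne_top)
      simpa using h3
    apply tendsto_of_tendsto_of_tendsto_of_le_of_le' hlow
      (tendsto_const_nhds (x := (1:ℝ≥0∞)))
    · filter_upwards [eventually_ge_atTop 1] with n hn
      obtain ⟨G, B, hGm, hB, hsub1, -, hPG⟩ := key n hn
      have h1 : P G ≤ P {ω | (0 : EuclideanSpace ℝ (Fin (p n)))
          ∈ interior (convexHull ℝ (Set.range fun i : Fin n => X n i ω))} := by
        have h2 : P G = P (G ∩ B) := (measure_inter_conull hB).symm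
        rw [h2]
        exact measure_mono hsub1
      have h3 : 1 - ENNReal.ofReal (((4*(2*ε+4*(max M 1))/ε + 5) * ((p n : ℝ)+1)) ^ (p n) * (max r (1/2)) ^ n) ≤ P G := by
        have h4 : P Gᶜ = 1 - P G := prob_compl_eq_one_sub hGm
        have h5 : 1 - ENNReal.ofReal (((4*(2*ε+4*(max M 1))/ε + 5) * ((p n : ℝ)+1)) ^ (p n) * (max r (1/2)) ^ n) ≤ 1 - P Gᶜ := tsub_le_tsub_left hPG 1
        rwa [h4, ENNReal.sub_sub_cancel ENNReal.one_ne_top prob_le_one] at h5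
      exact h3.trans h1
    · exact Eventually.of_forall fun n => prob_le_one
  · apply tendsto_of_tendsto_of_tendsto_of_le_of_le'
      (tendsto_const_nhds (x := (0:ℝ≥0∞))) hbnd0
    · exact Eventually.of_forall fun n => zero_le
    · filter_upwards [eventually_ge_atTop 1] with n hn
      obtain ⟨G, B, hGm, hB, -, hsub2, hPG⟩ := key n hn
      have h1 : {ω | ELval (p n) n (fun i => X n i ω) = 0} ⊆ Gᶜ ∪ Bᶜ := by
        intro ω hω
        rw [← Set.compl_inter]
        intro hmem
        exact (hsub2 hmem) hω
      calc P {ω | ELval (p n) n (fun i => X n i ω) = 0} ≤ P (Gᶜ ∪ Bᶜ) := measure_mono h1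
      _ ≤ P Gᶜ + P Bᶜ := measure_union_le _ _
      _ = P Gᶜ := by rw [hB, add_zero]
      _ ≤ ENNReal.ofReal (((4*(2*ε+4*(max M 1))/ε + 5) * ((p n : ℝ)+1)) ^ (p n) * (max r (1/2)) ^ n) := hPG
end

section
/- Suppose there exist ε > 0 and r < 1 such that P{u^T X_{n,1} > −ε} ≤ r for every unit vector u ∈ ℝ^{p_n} and every n, and that condition (D7) holds: for some q > 2, sup_n max_{i≤n} E‖X_{n,i}/p_n^{1/2}‖^q < ∞ and p_n^{3+6/(q−2)}/n → 0. Then P{0 lies in the interior of the convex hull of {X_{n,1}, …, X_{n,n}} in ℝ^{p_n}} → 1; equivalently, P{EL_n = 0} → 0 (condition (D0)). -/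
open MeasureTheory ProbabilityTheory Filter
open scoped ENNReal NNReal RealInnerProductSpace BigOperators

lemma sep_lemma {p : ℕ} (hp : 0 < p) (S : Set (EuclideanSpace ℝ (Fin p))) (hS : S.Nonempty)
    (h : (0 : EuclideanSpace ℝ (Fin p)) ∉ interior (convexHull ℝ S)) :
    ∃ u : EuclideanSpace ℝ (Fin p), ‖u‖ = 1 ∧ ∀ x ∈ S, 0 ≤ ⟪u, x⟫ := by
  set C := convexHull ℝ S with hCdef
  have hC : Convex ℝ C := convex_convexHull ℝ S
  by_cases hi : (interior C).Nonempty
  · obtain ⟨f, hf⟩ := geometric_hahn_banach_open_point hC.interior isOpen_interior h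
    obtain ⟨b, hb⟩ := hi
    have hfb : f b < 0 := by simpa using hf b hb
    have hle : ∀ x ∈ C, f x ≤ 0 := by
      intro x hx
      by_contra hpos
      push_neg at hpos
      have hdiff : 0 < f x - f b := by linarith
      set t : ℝ := min 1 (f x / (2 * (f x - f b))) with ht
      have ht0 : 0 < t := lt_min one_pos (by positivity)
      have ht1 : t ≤ 1 := min_le_left _ _
      have hmem : x + t • (b - x) ∈ interior C :=
        hC.add_smul_sub_mem_interior hx hb ⟨ht0, ht1⟩
      have := hf _ hmem
      simp only [map_add, f.map_smul, map_sub, smul_eq_mul, map_zero] at this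
      -- this : f x + t * (f b - f x) < 0
      have h2 : t * (f x - f b) ≤ f x / 2 := by
        calc t * (f x - f b) ≤ (f x / (2 * (f x - f b))) * (f x - f b) := by
              apply mul_le_mul_of_nonneg_right (min_le_right _ _) (le_of_lt hdiff)
          _ = f x / 2 := by field_simp
      nlinarith
    set y := (InnerProductSpace.toDual ℝ (EuclideanSpace ℝ (Fin p))).symm f with hy
    have hyx : ∀ x, ⟪y, x⟫ = f x := fun x => InnerProductSpace.toDual_symm_apply
    have hy0 : y ≠ 0 := by
      intro h0
      have := hyx b
      rw [h0] at this
      simp [inner_zero_left] at this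
      linarith
    refine ⟨-(‖y‖⁻¹ • y), ?_, ?_⟩
    · rw [norm_neg]; exact norm_smul_inv_norm hy0
    · intro x hx
      have : f x ≤ 0 := hle x (subset_convexHull ℝ S hx)
      rw [inner_neg_left, real_inner_smul_left, hyx]
      have hn : (0:ℝ) < ‖y‖⁻¹ := inv_pos.mpr (norm_pos_iff.mpr hy0)
      nlinarith
  · have htop : affineSpan ℝ S ≠ ⊤ := by
      intro htop
      apply hi
      rw [hC.interior_nonempty_iff_affineSpan_eq_top, hCdef, affineSpan_convexHull]
      exact htop
    obtain ⟨x₀, hx₀⟩ := hS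
    have hne : ((affineSpan ℝ S : AffineSubspace ℝ _) : Set _).Nonempty :=
      ⟨x₀, subset_affineSpan ℝ S hx₀⟩
    have hdir : (affineSpan ℝ S).direction ≠ ⊤ := by
      intro hd; exact htop ((AffineSubspace.direction_eq_top_iff_of_nonempty hne).mp hd)
    have horth : (affineSpan ℝ S).directionᗮ ≠ ⊥ := by
      simpa [Ne, Submodule.orthogonal_eq_bot_iff] using hdir
    obtain ⟨y, hyW, hy0⟩ := Submodule.exists_mem_ne_zero_of_ne_bot horth
    have hconst : ∀ x ∈ S, ⟪y, x⟫ = ⟪y, x₀⟫ := by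
      intro x hx
      have hmem : x - x₀ ∈ (affineSpan ℝ S).direction :=
        AffineSubspace.vsub_mem_direction (subset_affineSpan ℝ S hx) (subset_affineSpan ℝ S hx₀)
      have h0 : ⟪y, x - x₀⟫ = 0 := by
        rw [real_inner_comm]
        exact (Submodule.mem_orthogonal _ y).mp hyW _ hmem
      rw [inner_sub_right] at h0; linarith
    have hn : (0:ℝ) < ‖y‖⁻¹ := inv_pos.mpr (norm_pos_iff.mpr hy0)
    rcases le_or_gt 0 (⟪y, x₀⟫ : ℝ) with hc | hc
    · refine ⟨‖y‖⁻¹ • y, norm_smul_inv_norm hy0, ?_⟩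
      intro x hx
      rw [real_inner_smul_left, hconst x hx]
      positivity
    · refine ⟨-(‖y‖⁻¹ • y), by rw [norm_neg]; exact norm_smul_inv_norm hy0, ?_⟩
      intro x hx
      rw [inner_neg_left, real_inner_smul_left, hconst x hx]
      nlinarith

lemma coord_le_norm {p : ℕ} (u : EuclideanSpace ℝ (Fin p)) (j : Fin p) : |u j| ≤ ‖u‖ := by
  rw [EuclideanSpace.norm_eq]
  have h1 : |u j| = Real.sqrt (‖u j‖ ^ 2) := by
    rw [Real.sqrt_sq_eq_abs]; simp [Real.norm_eq_abs]
  rw [h1]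
  apply Real.sqrt_le_sqrt
  exact Finset.single_le_sum (f := fun i => ‖u i‖ ^ 2) (fun i _ => by positivity) (Finset.mem_univ j)

lemma net_lemma {p : ℕ} (hp : 0 < p) {δ : ℝ} (hδ0 : 0 < δ) (hδ1 : δ ≤ 1/2) :
    ∃ K : ℕ, (K : ℝ) ≤ 4 * Real.sqrt p / δ ∧
      ∃ v : (Fin p → Fin K) → EuclideanSpace ℝ (Fin p),
        (∀ k, ‖v k‖ = 1) ∧
        ∀ u : EuclideanSpace ℝ (Fin p), ‖u‖ = 1 → ∃ k, ‖u - v k‖ ≤ 2 * δ := by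
  classical
  have hsp : (1:ℝ) ≤ Real.sqrt p := by
    rw [show (1:ℝ) = Real.sqrt 1 by simp]
    exact Real.sqrt_le_sqrt (by exact_mod_cast hp)
  have hsp0 : (0:ℝ) < Real.sqrt p := lt_of_lt_of_le one_pos hsp
  set η : ℝ := δ / Real.sqrt p with hη
  have hη0 : 0 < η := div_pos hδ0 hsp0
  set K : ℕ := ⌈2 / η⌉₊ + 1 with hK
  have h2η : 2 / η = 2 * Real.sqrt p / δ := by rw [hη]; field_simp
  have hge : (4:ℝ) ≤ 2 / η := by
    rw [h2η, le_div_iff₀ hδ0]; nlinarith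
  have hKbound : (K : ℝ) ≤ 4 * Real.sqrt p / δ := by
    have hceil : (⌈2 / η⌉₊ : ℝ) < 2 / η + 1 :=
      Nat.ceil_lt_add_one (by linarith)
    have h4 : 4 * Real.sqrt p / δ = 2 * (2 / η) := by rw [h2η]; ring
    push_cast [hK]
    linarith
  refine ⟨K, hKbound, ?_⟩
  set g : Fin K → ℝ := fun m => -1 + m * η with hg
  set w : (Fin p → Fin K) → EuclideanSpace ℝ (Fin p) := fun k => WithLp.toLp 2 (fun j => g (k j)) with hw
  have hpne : (⟨0, hp⟩ : Fin p) = ⟨0, hp⟩ := rfl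
  refine ⟨fun k => if h : w k = 0 then EuclideanSpace.single ⟨0, hp⟩ (1:ℝ)
      else ‖w k‖⁻¹ • w k, ?_, ?_⟩
  · intro k
    by_cases h : w k = 0
    · simp only [dif_pos h, EuclideanSpace.norm_single]; norm_num
    · simp only [dif_neg h]; exact norm_smul_inv_norm h
  · intro u hu
    have hcoord : ∀ j, |u j| ≤ 1 := fun j => hu ▸ coord_le_norm u j
    set m : Fin p → ℕ := fun j => ⌊(u j + 1) / η⌋₊ with hm
    have hmK : ∀ j, m j < K := by
      intro j
      have h1 : (u j + 1)/η ≤ 2/η := by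
        gcongr
        linarith [abs_le.mp (hcoord j)]
      calc m j ≤ ⌊2/η⌋₊ := Nat.floor_le_floor h1
        _ ≤ ⌈2/η⌉₊ := Nat.floor_le_ceil _
        _ < K := by omega
    set k : Fin p → Fin K := fun j => ⟨m j, hmK j⟩ with hk
    refine ⟨k, ?_⟩
    have hclose : ∀ j, |u j - g (k j)| ≤ η := by
      intro j
      have habs := abs_le.mp (hcoord j)
      have hnn : 0 ≤ (u j + 1)/η := div_nonneg (by linarith) hη0.le
      have hfl : (m j : ℝ) ≤ (u j + 1)/η := Nat.floor_le hnn
      have hfl2 : (u j + 1)/η < m j + 1 := Nat.lt_floor_add_one _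
      have h1 : (m j : ℝ) * η ≤ u j + 1 := by
        rw [← le_div_iff₀ hη0]; exact hfl
      have h2 : u j + 1 < ((m j : ℝ) + 1) * η := by
        rw [← div_lt_iff₀ hη0]; exact hfl2
      have hgk : g (k j) = -1 + (m j : ℝ) * η := rfl
      rw [hgk, abs_le]
      constructor <;> nlinarith
    have hwk : ‖u - w k‖ ≤ δ := by
      rw [EuclideanSpace.norm_eq]
      have hterm : ∀ j, ‖(u - w k) j‖^2 ≤ η^2 := by
        intro j
        have : (u - w k) j = u j - g (k j) := rfl
        rw [this, Real.norm_eq_abs, sq_abs]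
        have := hclose j
        rw [abs_le] at this
        nlinarith
      have hsum : ∑ j, ‖(u - w k) j‖^2 ≤ (p : ℝ) * η^2 := by
        calc ∑ j, ‖(u - w k) j‖^2 ≤ ∑ _j : Fin p, η^2 :=
              Finset.sum_le_sum (fun j _ => hterm j)
          _ = (p : ℝ) * η^2 := by rw [Finset.sum_const, Finset.card_univ, Fintype.card_fin,
              nsmul_eq_mul]
      calc Real.sqrt (∑ j, ‖(u - w k) j‖^2) ≤ Real.sqrt ((p:ℝ) * η^2) :=
            Real.sqrt_le_sqrt hsum
        _ = Real.sqrt p * η := by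
            rw [Real.sqrt_mul (by positivity), Real.sqrt_sq hη0.le]
        _ = δ := by rw [hη]; field_simp
    have hlow : 1 - δ ≤ ‖w k‖ := by
      have h3 := norm_sub_norm_le u (w k)
      rw [hu] at h3; linarith
    have hwk0 : w k ≠ 0 := by
      intro h0; rw [h0, norm_zero] at hlow; linarith
    simp only [dif_neg hwk0]
    have hup : |‖w k‖ - 1| ≤ δ := by
      have h2 := abs_norm_sub_norm_le (w k) u
      rw [hu, norm_sub_rev] at h2; linarith
    have hn0 : ‖w k‖ ≠ 0 := norm_ne_zero_iff.mpr hwk0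
    have hdist2 : ‖w k - ‖w k‖⁻¹ • w k‖ ≤ δ := by
      have he1 : w k - ‖w k‖⁻¹ • w k = (1 - ‖w k‖⁻¹) • w k := by
        rw [sub_smul, one_smul]
      rw [he1, norm_smul, Real.norm_eq_abs]
      have he2 : |1 - ‖w k‖⁻¹| * ‖w k‖ = |‖w k‖ - 1| := by
        rw [← abs_of_nonneg (norm_nonneg (w k)), ← abs_mul]
        · congr 1; field_simp; rw [abs_norm]; ring
      rw [he2]; exact hup
    calc ‖u - ‖w k‖⁻¹ • w k‖ ≤ ‖u - w k‖ + ‖w k - ‖w k‖⁻¹ • w k‖ :=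
          norm_sub_le_norm_sub_add_norm_sub _ _ _
      _ ≤ δ + δ := add_le_add hwk hdist2
      _ = 2 * δ := by ring

lemma pos_comb {p n : ℕ} (hn : 0 < n) (x : Fin n → EuclideanSpace ℝ (Fin p))
    (h : (0 : EuclideanSpace ℝ (Fin p)) ∈ interior (convexHull ℝ (Set.range x))) :
    ∃ w : Fin n → ℝ, (∀ i, 0 < w i) ∧ ∑ i, w i = 1 ∧ ∑ i, w i • x i = 0 := by
  obtain ⟨ρ, hρ0, hball⟩ := Metric.isOpen_iff.mp isOpen_interior 0 h
  have hballC : Metric.ball (0 : EuclideanSpace ℝ (Fin p)) ρ ⊆ convexHull ℝ (Set.range x) :=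
    hball.trans interior_subset
  set σ : EuclideanSpace ℝ (Fin p) := ∑ i, x i with hσ
  set t : ℝ := ρ / (2 * (‖σ‖ + 1)) with ht
  have ht0 : 0 < t := by positivity
  have hyC : -t • σ ∈ convexHull ℝ (Set.range x) := by
    apply hballC
    rw [Metric.mem_ball, dist_zero_right, norm_smul, Real.norm_eq_abs, abs_neg,
      abs_of_pos ht0]
    rw [ht]
    rw [div_mul_eq_mul_div, div_lt_iff₀ (by positivity)]
    nlinarith [norm_nonneg σ]
  rw [convexHull_range_eq_exists_affineCombination] at hyC
  obtain ⟨s, w, hw0, hw1, hwa⟩ := hyC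
  have hwa' : ∑ i ∈ s, w i • x i = -t • σ := by
    rw [← hwa, Finset.affineCombination_eq_linear_combination _ _ _ hw1]
  set a : Fin n → ℝ := fun i => if i ∈ s then w i else 0 with ha
  have ha0 : ∀ i, 0 ≤ a i := by
    intro i; rw [ha]; dsimp only
    split
    · exact hw0 _ ‹_›
    · exact le_refl 0
  have ha1 : ∑ i, a i = 1 := by
    rw [ha, Finset.sum_ite_mem, Finset.univ_inter, hw1]
  have hax : ∑ i, a i • x i = -t • σ := by
    rw [← hwa']
    rw [ha]
    rw [← Finset.sum_subset (Finset.subset_univ s)]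
    · apply Finset.sum_congr rfl
      intro i hi; simp [hi]
    · intro i _ hi; simp [hi]
  have hden : (0:ℝ) < 1 + n * t := by positivity
  refine ⟨fun i => (a i + t) / (1 + n * t), ?_, ?_, ?_⟩
  · intro i
    exact div_pos (by linarith [ha0 i]) hden
  · rw [← Finset.sum_div]
    rw [Finset.sum_add_distrib, ha1, Finset.sum_const, Finset.card_univ, Fintype.card_fin,
      nsmul_eq_mul]
    field_simp
  · have key : ∑ i, ((a i + t) / (1 + ↑n * t)) • x i
        = (1 + ↑n * t)⁻¹ • (∑ i, a i • x i + ∑ i, t • x i) := by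
      rw [← Finset.sum_add_distrib, Finset.smul_sum]
      apply Finset.sum_congr rfl
      intro i _
      rw [← add_smul, smul_smul, div_eq_inv_mul]
    rw [key, ← Finset.smul_sum, ← hσ, hax]
    simp

lemma ELval_ne_zero {p n : ℕ} (hn : 0 < n) (x : Fin n → EuclideanSpace ℝ (Fin p))
    (h : (0 : EuclideanSpace ℝ (Fin p)) ∈ interior (convexHull ℝ (Set.range x))) :
    ELval p n x ≠ 0 := by
  obtain ⟨w, hw0, hw1, hwx⟩ := pos_comb hn x h
  have hmem : (∏ i, ((n : ℝ) * w i)) ∈ {r : ℝ | ∃ w : Fin n → ℝ, (∀ i, 0 < w i) ∧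
      ∑ i, w i = 1 ∧ ∑ i, w i • x i = 0 ∧ r = ∏ i, ((n : ℝ) * w i)} :=
    ⟨w, hw0, hw1, hwx, rfl⟩
  have hprodpos : 0 < ∏ i, ((n : ℝ) * w i) :=
    Finset.prod_pos (fun i _ => mul_pos (show (0:ℝ) < (n:ℝ) by exact_mod_cast hn) (hw0 i))
  have hbdd : BddAbove {r : ℝ | ∃ w : Fin n → ℝ, (∀ i, 0 < w i) ∧
      ∑ i, w i = 1 ∧ ∑ i, w i • x i = 0 ∧ r = ∏ i, ((n : ℝ) * w i)} := by
    refine ⟨(n:ℝ)^n, ?_⟩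
    rintro r ⟨v, hv0, hv1, hvx, rfl⟩
    have hvle : ∀ i, v i ≤ 1 := by
      intro i
      rw [← hv1]
      exact Finset.single_le_sum (f := v) (fun j _ => (hv0 j).le) (Finset.mem_univ i)
    calc ∏ i, ((n:ℝ) * v i) ≤ ∏ _i : Fin n, (n:ℝ) := by
          apply Finset.prod_le_prod
          · intro i _; exact mul_nonneg (show (0:ℝ) ≤ (n:ℝ) by positivity) (hv0 i).le
          · intro i _; nlinarith [hv0 i, hvle i, show (0:ℝ) ≤ (n:ℝ) by positivity]
      _ = (n:ℝ)^n := by rw [Finset.prod_const, Finset.card_univ, Fintype.card_fin]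
  have hle : ∏ i, ((n : ℝ) * w i) ≤ ELval p n x := le_csSup hbdd hmem
  unfold ELval
  intro h0
  rw [ELval] at hle
  linarith

lemma markov_norm {Ω : Type*} [MeasurableSpace Ω] (P : Measure Ω) [IsProbabilityMeasure P]
    {d : ℕ} (Y : Ω → EuclideanSpace ℝ (Fin d)) {q T B : ℝ} (hq : 0 < q) (hT : 0 < T)
    (hint : Integrable (fun ω => ‖Y ω‖ ^ q) P)
    (hB : ∫ ω, ‖Y ω‖ ^ q ∂P ≤ B) :
    P {ω | T < ‖Y ω‖} ≤ ENNReal.ofReal (B / T ^ q) := by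
  have hTq : 0 < T ^ q := Real.rpow_pos_of_pos hT q
  have hsub : {ω | T < ‖Y ω‖} ⊆ {ω | T ^ q ≤ ‖Y ω‖ ^ q} := by
    intro ω hω
    exact Real.rpow_le_rpow hT.le (le_of_lt hω) hq.le
  have hmarkov := mul_meas_ge_le_integral_of_nonneg
    (f := fun ω => ‖Y ω‖ ^ q) (μ := P)
    (Filter.Eventually.of_forall fun ω => Real.rpow_nonneg (norm_nonneg _) q)
    hint (T ^ q)
  have h1 : P {ω | T < ‖Y ω‖} ≤ P {ω | T ^ q ≤ ‖Y ω‖ ^ q} := measure_mono hsub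
  have h2 : (P {ω | T ^ q ≤ ‖Y ω‖ ^ q}).toReal ≤ B / T ^ q := by
    rw [le_div_iff₀ hTq]
    calc (P {ω | T ^ q ≤ ‖Y ω‖ ^ q}).toReal * T ^ q
        = T ^ q * (P {ω | T ^ q ≤ ‖Y ω‖ ^ q}).toReal := by ring
      _ ≤ ∫ ω, ‖Y ω‖ ^ q ∂P := hmarkov
      _ ≤ B := hB
  calc P {ω | T < ‖Y ω‖} ≤ P {ω | T ^ q ≤ ‖Y ω‖ ^ q} := h1
    _ = ENNReal.ofReal ((P {ω | T ^ q ≤ ‖Y ω‖ ^ q}).toReal) :=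
        (ENNReal.ofReal_toReal (measure_ne_top P _)).symm
    _ ≤ ENNReal.ofReal (B / T ^ q) := ENNReal.ofReal_le_ofReal h2

lemma indep_bound {Ω : Type*} [MeasurableSpace Ω] (P : Measure Ω) [IsProbabilityMeasure P]
    {n d : ℕ} (X : Fin n → Ω → EuclideanSpace ℝ (Fin d))
    (hindep : iIndepFun X P)
    (v : EuclideanSpace ℝ (Fin d)) {ε : ℝ} {c : ℝ≥0∞}
    (hdir : ∀ i, P {ω | -ε < ⟪v, X i ω⟫} ≤ c) :
    P {ω | ∀ i, -ε < ⟪v, X i ω⟫} ≤ c ^ n := by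
  have hms : MeasurableSet {x : EuclideanSpace ℝ (Fin d) | -ε < ⟪v, x⟫} := by
    have hcont : Continuous fun x : EuclideanSpace ℝ (Fin d) => ⟪v, x⟫ :=
      continuous_const.inner continuous_id
    exact measurableSet_lt measurable_const hcont.measurable
  have hkey := hindep.measure_inter_preimage_eq_mul
    (S := Finset.univ) (sets := fun _ => {x : EuclideanSpace ℝ (Fin d) | -ε < ⟪v, x⟫})
    (fun i _ => hms)
  have hset : {ω | ∀ i, -ε < ⟪v, X i ω⟫}
      = ⋂ i ∈ Finset.univ, X i ⁻¹' {x | -ε < ⟪v, x⟫} := by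
    ext ω; simp [Set.mem_iInter, Set.mem_preimage]
  rw [hset, hkey]
  calc ∏ i : Fin n, P (X i ⁻¹' {x | -ε < ⟪v, x⟫})
      ≤ ∏ _i : Fin n, c := Finset.prod_le_prod' (fun i _ => hdir i)
    _ = c ^ n := by rw [Finset.prod_const, Finset.card_univ, Fintype.card_fin]


lemma key_bound {Ω : Type*} [MeasurableSpace Ω] (P : Measure Ω) [IsProbabilityMeasure P]
    {n d : ℕ} (hn : 0 < n) (hd : 0 < d)
    (X : Fin n → Ω → EuclideanSpace ℝ (Fin d))
    (hindep : iIndepFun X P)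
    {ε r₁ : ℝ} (hε : 0 < ε) (hr₁ : 0 ≤ r₁)
    (hdir : ∀ (i : Fin n) (u : EuclideanSpace ℝ (Fin d)), ‖u‖ = 1 →
      P {ω | -ε < ⟪u, X i ω⟫} ≤ ENNReal.ofReal r₁)
    {q B T : ℝ} (hq : 0 < q) (hT : 0 < T) (hB : 0 ≤ B)
    (hδhalf : ε / (4 * T) ≤ 1/2)
    (hint : ∀ i, Integrable (fun ω => ‖X i ω‖ ^ q) P)
    (hmomB : ∀ i, ∫ ω, ‖X i ω‖ ^ q ∂P ≤ B) :
    P {ω | (0:EuclideanSpace ℝ (Fin d)) ∉ interior (convexHull ℝ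
        (Set.range fun i => X i ω))}
      ≤ ENNReal.ofReal ((n:ℝ) * (B / T ^ q)
          + (16 * Real.sqrt d * T / ε) ^ d * r₁ ^ n) := by
  classical
  set δ : ℝ := ε / (4 * T) with hδ
  have hδ0 : 0 < δ := by positivity
  obtain ⟨K, hK, v, hvnorm, hvnet⟩ := net_lemma hd hδ0 hδhalf
  -- inclusion
  have hincl : {ω | (0:EuclideanSpace ℝ (Fin d)) ∉ interior (convexHull ℝ
        (Set.range fun i => X i ω))}
      ⊆ (⋃ i, {ω | T < ‖X i ω‖}) ∪ ⋃ k, {ω | ∀ i, -ε < ⟪v k, X i ω⟫} := by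
    intro ω hω
    by_cases hbig : ∃ i, T < ‖X i ω‖
    · left
      obtain ⟨i, hi⟩ := hbig
      exact Set.mem_iUnion.mpr ⟨i, hi⟩
    · right
      push_neg at hbig
      have : Nonempty (Fin n) := ⟨⟨0, hn⟩⟩
      have hSne : (Set.range fun i => X i ω).Nonempty := Set.range_nonempty _
      obtain ⟨u, hu1, hupos⟩ := sep_lemma hd _ hSne hω
      obtain ⟨k, hk⟩ := hvnet u hu1
      refine Set.mem_iUnion.mpr ⟨k, ?_⟩
      intro i
      have hXi : 0 ≤ ⟪u, X i ω⟫ := hupos _ ⟨i, rfl⟩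
      have hinner : |⟪v k - u, X i ω⟫| ≤ ‖v k - u‖ * ‖X i ω‖ :=
        abs_real_inner_le_norm _ _
      have hd1 : ‖v k - u‖ ≤ 2 * δ := by rw [norm_sub_rev]; exact hk
      have hd2 : |⟪v k - u, X i ω⟫| ≤ 2 * δ * T := by
        calc |⟪v k - u, X i ω⟫| ≤ ‖v k - u‖ * ‖X i ω‖ := hinner
          _ ≤ (2 * δ) * T := by
              apply mul_le_mul hd1 (hbig i) (norm_nonneg _) (by positivity)
      have h2δT : 2 * δ * T = ε / 2 := by
        rw [hδ]; field_simp; ring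
      have hsplit : ⟪v k, X i ω⟫ = ⟪u, X i ω⟫ + ⟪v k - u, X i ω⟫ := by
        rw [inner_sub_left]; ring
      show -ε < ⟪v k, X i ω⟫
      have habs := abs_le.mp hd2
      rw [hsplit]
      have hεT : ε / 2 < ε := by linarith
      linarith [h2δT ▸ habs.1]
  -- measure bound
  have hmeas1 : P (⋃ i, {ω | T < ‖X i ω‖}) ≤ (n:ℕ) • ENNReal.ofReal (B / T ^ q) := by
    calc P (⋃ i, {ω | T < ‖X i ω‖}) ≤ ∑ i : Fin n, P {ω | T < ‖X i ω‖} :=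
          measure_iUnion_fintype_le _ _
      _ ≤ (Finset.univ : Finset (Fin n)).card • ENNReal.ofReal (B / T ^ q) :=
          Finset.sum_le_card_nsmul _ _ _
            (fun i _ => markov_norm P (X i) hq hT (hint i) (hmomB i))
      _ = (n:ℕ) • ENNReal.ofReal (B / T ^ q) := by
          rw [Finset.card_univ, Fintype.card_fin]
  have hmeas2 : P (⋃ k, {ω | ∀ i, -ε < ⟪v k, X i ω⟫})
      ≤ (K ^ d : ℕ) • (ENNReal.ofReal r₁) ^ n := by
    calc P (⋃ k, {ω | ∀ i, -ε < ⟪v k, X i ω⟫})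
        ≤ ∑ k : Fin d → Fin K, P {ω | ∀ i, -ε < ⟪v k, X i ω⟫} :=
          measure_iUnion_fintype_le _ _
      _ ≤ (Finset.univ : Finset (Fin d → Fin K)).card • (ENNReal.ofReal r₁) ^ n :=
          Finset.sum_le_card_nsmul _ _ _
            (fun k _ => indep_bound P X hindep (v k) (fun i => hdir i (v k) (hvnorm k)))
      _ = (K ^ d : ℕ) • (ENNReal.ofReal r₁) ^ n := by
          rw [Finset.card_univ, Fintype.card_fun, Fintype.card_fin, Fintype.card_fin]
  have htot := le_trans (measure_mono hincl) (le_trans (measure_union_le _ _)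
    (add_le_add hmeas1 hmeas2))
  refine le_trans htot ?_
  have hterm1 : (n:ℕ) • ENNReal.ofReal (B / T ^ q) = ENNReal.ofReal ((n:ℝ) * (B / T ^ q)) := by
    rw [nsmul_eq_mul, ← ENNReal.ofReal_natCast n, ← ENNReal.ofReal_mul (Nat.cast_nonneg n)]
  have hterm2 : (K ^ d : ℕ) • (ENNReal.ofReal r₁) ^ n
      ≤ ENNReal.ofReal ((16 * Real.sqrt d * T / ε) ^ d * r₁ ^ n) := by
    rw [nsmul_eq_mul, ← ENNReal.ofReal_pow hr₁, ← ENNReal.ofReal_natCast (K ^ d),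
      ← ENNReal.ofReal_mul (Nat.cast_nonneg _)]
    apply ENNReal.ofReal_le_ofReal
    apply mul_le_mul_of_nonneg_right ?_ (pow_nonneg hr₁ n)
    push_cast
    calc ((K:ℝ)) ^ d ≤ (4 * Real.sqrt d / δ) ^ d :=
          pow_le_pow_left₀ (Nat.cast_nonneg K) hK d
      _ = (16 * Real.sqrt d * T / ε) ^ d := by
          congr 1
          rw [hδ]
          field_simp
          ring
  calc (n:ℕ) • ENNReal.ofReal (B / T ^ q) + (K ^ d : ℕ) • (ENNReal.ofReal r₁) ^ n
      ≤ ENNReal.ofReal ((n:ℝ) * (B / T ^ q))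
        + ENNReal.ofReal ((16 * Real.sqrt d * T / ε) ^ d * r₁ ^ n) := by
        rw [← hterm1]; exact add_le_add le_rfl hterm2
    _ = ENNReal.ofReal ((n:ℝ) * (B / T ^ q) + (16 * Real.sqrt d * T / ε) ^ d * r₁ ^ n) := by
        rw [ENNReal.ofReal_add (by positivity) (by positivity)]

/-- **Lemma 4.2(b).**
Triangular array of i.i.d. random vectors in `ℝ^{pₙ}`.  Suppose there exist `ε > 0`
and `r < 1` such that `P{uᵀ X_{n,1} > −ε} ≤ r` for every unit vector `u` and every
`n`, and that condition (D7) holds: for some `q > 2`,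
`sup_n max_{i≤n} E‖Xₙᵢ/pₙ^{1/2}‖ᵠ < ∞` and `pₙ^{3+6/(q−2)}/n → 0`.
Then the probability that `0` lies in the interior of the convex hull of
`{X_{n,1}, …, X_{n,n}}` tends to one; equivalently, `P{ELₙ = 0} → 0`
(condition (D0)). -/
theorem zero_in_convex_hull_moment_case
    {Ω : Type*} [MeasurableSpace Ω] (P : Measure Ω) [IsProbabilityMeasure P]
    (p : ℕ → ℕ)
    (X : (n : ℕ) → Fin n → Ω → EuclideanSpace ℝ (Fin (p n)))
    (hXmeas : ∀ n i, Measurable (X n i))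
    (hindep : ∀ n, iIndepFun (X n) P)
    (hident : ∀ n, ∀ i j : Fin n, IdentDistrib (X n i) (X n j) P P)
    (ε r : ℝ) (hε : 0 < ε) (hr : r < 1)
    (hdir : ∀ n (i : Fin n) (u : EuclideanSpace ℝ (Fin (p n))), ‖u‖ = 1 →
      P {ω | -ε < ⟪u, X n i ω⟫} ≤ ENNReal.ofReal r)
    -- condition (D7)
    (q M : ℝ) (hq : 2 < q)
    (hint : ∀ n (i : Fin n), Integrable (fun ω => ‖X n i ω‖ ^ q) P)
    (hmom : ∀ n (i : Fin n),
      ∫ ω, ‖(Real.sqrt (p n))⁻¹ • X n i ω‖ ^ q ∂P ≤ M)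
    (hgrowth : Tendsto (fun n => (p n : ℝ) ^ (3 + 6 / (q - 2)) / (n : ℝ))
      atTop (nhds 0)) :
    Tendsto (fun n => P {ω | (0 : EuclideanSpace ℝ (Fin (p n)))
        ∈ interior (convexHull ℝ (Set.range fun i : Fin n => X n i ω))})
      atTop (nhds 1)
    ∧ Tendsto (fun n => P {ω | ELval (p n) n (fun i => X n i ω) = 0})
      atTop (nhds 0) := by

  classical
  set r₁ : ℝ := max r (1/2) with hr₁def
  have hr₁pos : 0 < r₁ := lt_of_lt_of_le (by norm_num) (le_max_right _ _)
  have hr₁lt : r₁ < 1 := max_lt hr (by norm_num)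
  have hdir' : ∀ n (i : Fin n) (u : EuclideanSpace ℝ (Fin (p n))), ‖u‖ = 1 →
      P {ω | -ε < ⟪u, X n i ω⟫} ≤ ENNReal.ofReal r₁ :=
    fun n i u hu => le_trans (hdir n i u hu) (ENNReal.ofReal_le_ofReal (le_max_left _ _))
  have hq0 : (0:ℝ) < q := by linarith
  have hM : 0 ≤ M :=
    le_trans (integral_nonneg fun ω => Real.rpow_nonneg (norm_nonneg _) q)
      (hmom 1 ⟨0, one_pos⟩)
  set T : ℕ → ℝ := fun n => (n:ℝ) ^ ((3:ℝ)/q) * Real.sqrt (p n) with hTdef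
  set B : ℕ → ℝ := fun n => M * Real.sqrt (p n) ^ q with hBdef
  have hB0 : ∀ n, 0 ≤ B n := fun n =>
    mul_nonneg hM (Real.rpow_nonneg (Real.sqrt_nonneg _) q)
  set c : ℕ → ℝ := fun n => (n:ℝ) * (B n / T n ^ q)
      + (16 * Real.sqrt (p n) * T n / ε) ^ (p n) * r₁ ^ n with hcdef
  set badset : (n : ℕ) → Set Ω := fun n => {ω | (0 : EuclideanSpace ℝ (Fin (p n)))
      ∉ interior (convexHull ℝ (Set.range fun i : Fin n => X n i ω))} with hbaddef
  -- eventual facts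
  have hF3 : ∀ᶠ n : ℕ in atTop, ε ≤ (n:ℝ) ^ ((3:ℝ)/q) := by
    have h := tendsto_rpow_atTop (show (0:ℝ) < 3/q by positivity)
    exact (h.comp tendsto_natCast_atTop_atTop).eventually_ge_atTop ε
  -- the measure bound
  have hPbound : ∀ᶠ n in atTop, P (badset n) ≤ ENNReal.ofReal (c n) := by
    filter_upwards [eventually_ge_atTop 1, hF3] with n hn1 hn3
    have hn0 : 0 < n := hn1
    by_cases hpn : 0 < p n
    · -- main case: use key_bound
      have hsp : (0:ℝ) < Real.sqrt (p n) := Real.sqrt_pos.mpr (by exact_mod_cast hpn)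
      have hsp1 : (1:ℝ) ≤ Real.sqrt (p n) := by
        rw [show (1:ℝ) = Real.sqrt 1 by simp]
        exact Real.sqrt_le_sqrt (by exact_mod_cast hpn)
      have hnq1 : (1:ℝ) ≤ (n:ℝ) ^ ((3:ℝ)/q) := by
        rw [show (1:ℝ) = (1:ℝ) ^ ((3:ℝ)/q) from (Real.one_rpow _).symm]
        exact Real.rpow_le_rpow zero_le_one (by exact_mod_cast hn1) (by positivity)
      have hT0 : 0 < T n := by
        rw [hTdef]
        have : (0:ℝ) < (n:ℝ) ^ ((3:ℝ)/q) :=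
          Real.rpow_pos_of_pos (by exact_mod_cast hn0) _
        positivity
      have hεT : ε ≤ T n := by
        rw [hTdef]
        calc ε ≤ (n:ℝ) ^ ((3:ℝ)/q) := hn3
          _ = (n:ℝ) ^ ((3:ℝ)/q) * 1 := by ring
          _ ≤ (n:ℝ) ^ ((3:ℝ)/q) * Real.sqrt (p n) := by
              apply mul_le_mul_of_nonneg_left hsp1 (by positivity)
      have hδ : ε / (4 * T n) ≤ 1/2 := by
        rw [div_le_iff₀ (by positivity)]
        linarith
      have hmomB : ∀ i, ∫ ω, ‖X n i ω‖ ^ q ∂P ≤ B n := by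
        intro i
        have h1 := hmom n i
        have heq : ∀ ω, ‖(Real.sqrt (p n))⁻¹ • X n i ω‖ ^ q
            = ((Real.sqrt (p n))⁻¹) ^ q * ‖X n i ω‖ ^ q := by
          intro ω
          rw [norm_smul, Real.norm_eq_abs, abs_of_pos (inv_pos.mpr hsp),
            Real.mul_rpow (inv_pos.mpr hsp).le (norm_nonneg _)]
        simp only [heq] at h1
        rw [MeasureTheory.integral_const_mul] at h1
        rw [Real.inv_rpow hsp.le] at h1
        have hspq : 0 < Real.sqrt (p n) ^ q := Real.rpow_pos_of_pos hsp q
        rw [inv_mul_le_iff₀ hspq] at h1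
        rw [hBdef]
        calc ∫ ω, ‖X n i ω‖ ^ q ∂P ≤ Real.sqrt (p n) ^ q * M := h1
          _ = M * Real.sqrt (p n) ^ q := by ring
      exact key_bound P hn0 hpn (X n) (hindep n) hε hr₁pos.le (hdir' n)
        hq0 hT0 (hB0 n) hδ (hint n) hmomB
    · -- p n = 0 : the bad set is empty
      have hp0 : p n = 0 := Nat.eq_zero_of_not_pos hpn
      have hsub : Subsingleton (EuclideanSpace ℝ (Fin (p n))) :=
        ⟨fun a b => by ext i; exact absurd i.isLt (by omega)⟩
      have hbade : badset n = ∅ := by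
        rw [hbaddef]
        ext ω
        simp only [Set.mem_setOf_eq, Set.mem_empty_iff_false, iff_false, not_not]
        have hU : (Set.range fun i : Fin n => X n i ω) = Set.univ := by
          apply Set.eq_univ_of_forall
          intro y
          exact ⟨⟨0, hn0⟩, Subsingleton.elim _ _⟩
        rw [hU, convexHull_univ, interior_univ]
        exact Set.mem_univ _
      rw [hbade]
      simp
  -- growth consequences
  have hpev : ∀ᶠ n : ℕ in atTop, (p n : ℝ) ^ ((3:ℝ) + 6/(q-2)) ≤ (n:ℝ) := by
    have h1 : ∀ᶠ n : ℕ in atTop, (p n:ℝ)^((3:ℝ)+6/(q-2))/(n:ℝ) < 1 :=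
      hgrowth.eventually_lt_const one_pos
    filter_upwards [h1, eventually_ge_atTop 1] with n hlt hn1
    have hn0 : (0:ℝ) < n := by exact_mod_cast hn1
    rw [div_lt_one hn0] at hlt
    exact hlt.le
  set Cst : ℝ := 16 / ε with hCstdef
  have hCst : 0 < Cst := by positivity
  set L : ℝ := Real.log r₁ with hLdef
  have hL : L < 0 := Real.log_neg hr₁pos hr₁lt
  set E : ℕ → ℝ := fun n => (n:ℝ)^((1:ℝ)/3) * Real.log (Cst * (n:ℝ)^(3:ℕ)) + (n:ℝ) * L
    with hEdef
  -- G tends to zero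
  have hGreal : Tendsto (fun x : ℝ => Real.log (Cst * x^(3:ℕ)) / x ^ ((2:ℝ)/3))
      atTop (nhds 0) := by
    have h1 : Tendsto (fun x:ℝ => Real.log x / x ^ ((2:ℝ)/3)) atTop (nhds 0) :=
      (isLittleO_log_rpow_atTop (by norm_num : (0:ℝ) < 2/3)).tendsto_div_nhds_zero
    have h2 : Tendsto (fun x:ℝ => Real.log Cst / x ^ ((2:ℝ)/3)) atTop (nhds 0) := by
      have := (tendsto_rpow_atTop (by norm_num : (0:ℝ) < 2/3)).inv_tendsto_atTop
      have h3 := this.const_mul (Real.log Cst)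
      rw [mul_zero] at h3
      refine h3.congr fun x => ?_
      simp [Pi.inv_apply, div_eq_mul_inv]
    have h1' : Tendsto (fun x:ℝ => 3 * (Real.log x / x ^ ((2:ℝ)/3))) atTop (nhds 0) := by
      have h3 := h1.const_mul (3:ℝ)
      rwa [mul_zero] at h3
    have hsum := h2.add h1'
    rw [add_zero] at hsum
    apply hsum.congr'
    filter_upwards [eventually_ge_atTop (1:ℝ)] with x hx
    have hx0 : (0:ℝ) < x := by linarith
    rw [Real.log_mul hCst.ne' (by positivity), Real.log_pow, add_div]
    push_cast
    ring
  have hGto : Tendsto (fun n : ℕ => Real.log (Cst * (n:ℝ)^(3:ℕ)) / (n:ℝ) ^ ((2:ℝ)/3))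
      atTop (nhds 0) := hGreal.comp tendsto_natCast_atTop_atTop
  have hEbound : ∀ᶠ n : ℕ in atTop, E n ≤ (n:ℝ) * (L/2) := by
    filter_upwards [hGto.eventually_lt_const (show (0:ℝ) < -(L/2) by linarith),
      eventually_ge_atTop 1] with n hG hn1
    have hn0 : (0:ℝ) < n := by exact_mod_cast hn1
    have h23 : (0:ℝ) < (n:ℝ)^((2:ℝ)/3) := Real.rpow_pos_of_pos hn0 _
    have hid : (n:ℝ)^((2:ℝ)/3) * (n:ℝ)^((1:ℝ)/3) = (n:ℝ) := by
      rw [← Real.rpow_add hn0]; norm_num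
    set A : ℝ := Real.log (Cst * (n:ℝ)^(3:ℕ)) with hA
    have hkey : (n:ℝ)^((1:ℝ)/3) * A = (A / (n:ℝ)^((2:ℝ)/3)) * n := by
      rw [div_mul_eq_mul_div, eq_div_iff h23.ne']
      calc (n:ℝ)^((1:ℝ)/3) * A * (n:ℝ)^((2:ℝ)/3)
          = A * ((n:ℝ)^((2:ℝ)/3) * (n:ℝ)^((1:ℝ)/3)) := by ring
        _ = A * n := by rw [hid]
    rw [hEdef]
    dsimp only
    rw [← hA, hkey]
    have hstep : (A / (n:ℝ)^((2:ℝ)/3)) * n ≤ (-(L/2)) * n :=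
      mul_le_mul_of_nonneg_right hG.le hn0.le
    nlinarith
  have hEtendsto : Tendsto E atTop atBot := by
    apply tendsto_atBot_mono' atTop hEbound
    have hhalf : L / 2 < 0 := by linarith
    exact Tendsto.atTop_mul_const_of_neg hhalf tendsto_natCast_atTop_atTop
  -- M / n^2 → 0
  have hMn2 : Tendsto (fun n : ℕ => M / (n:ℝ)^2) atTop (nhds 0) := by
    have hpow : Tendsto (fun n : ℕ => ((n:ℝ))^2) atTop atTop :=
      (tendsto_pow_atTop (two_ne_zero)).comp tendsto_natCast_atTop_atTop
    have := hpow.inv_tendsto_atTop.const_mul M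
    rw [mul_zero] at this
    exact this.congr fun n => by simp [Pi.inv_apply, div_eq_mul_inv]
  -- c is eventually bounded
  have hc0 : ∀ n, 0 ≤ c n := by
    intro n
    have hT0 : 0 ≤ T n := by
      rw [hTdef]; dsimp only; positivity
    rw [hcdef]; dsimp only
    have h1 : (0:ℝ) ≤ (n:ℝ) * (B n / T n ^ q) :=
      mul_nonneg (Nat.cast_nonneg n)
        (div_nonneg (hB0 n) (Real.rpow_nonneg hT0 q))
    have h2 : (0:ℝ) ≤ (16 * Real.sqrt (p n) * T n / ε) ^ (p n) * r₁ ^ n :=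
      mul_nonneg (pow_nonneg (by positivity) _) (pow_nonneg hr₁pos.le _)
    exact add_nonneg h1 h2
  have hcle : ∀ᶠ n : ℕ in atTop, c n ≤ M / (n:ℝ)^2 + Real.exp (E n) := by
    filter_upwards [eventually_ge_atTop 1, hpev,
      ((tendsto_pow_atTop (three_ne_zero)).comp
        tendsto_natCast_atTop_atTop |>.const_mul_atTop hCst).eventually_ge_atTop 1]
      with n hn1 hpevn h1C
    have hn0 : (0:ℝ) < n := by exact_mod_cast hn1
    have hn1R : (1:ℝ) ≤ n := by exact_mod_cast hn1
    have hcast : (0:ℝ) ≤ (p n : ℝ) := Nat.cast_nonneg _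
    -- p-bounds
    have hpn_le : (p n:ℝ) ≤ n := by
      rcases Nat.eq_zero_or_pos (p n) with h0 | hpos
      · rw [h0]; exact_mod_cast Nat.cast_nonneg n
      · have hp1 : (1:ℝ) ≤ (p n:ℝ) := by exact_mod_cast hpos
        calc (p n:ℝ) = (p n:ℝ)^((1:ℝ)) := (Real.rpow_one _).symm
          _ ≤ (p n:ℝ)^((3:ℝ)+6/(q-2)) := by
              apply Real.rpow_le_rpow_of_exponent_le hp1
              have : (0:ℝ) < 6/(q-2) := by
                apply div_pos (by norm_num); linarith
              linarith
          _ ≤ n := hpevn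
    have hp3 : (p n:ℝ)^((3:ℝ)) ≤ n := by
      rcases Nat.eq_zero_or_pos (p n) with h0 | hpos
      · rw [h0]
        push_cast
        rw [Real.zero_rpow (by norm_num)]
        exact_mod_cast Nat.cast_nonneg n
      · have hp1 : (1:ℝ) ≤ (p n:ℝ) := by exact_mod_cast hpos
        calc (p n:ℝ)^((3:ℝ)) ≤ (p n:ℝ)^((3:ℝ)+6/(q-2)) := by
              apply Real.rpow_le_rpow_of_exponent_le hp1
              have : (0:ℝ) < 6/(q-2) := by
                apply div_pos (by norm_num); linarith
              linarith
          _ ≤ n := hpevn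
    have hp13 : (p n:ℝ) ≤ (n:ℝ)^((1:ℝ)/3) := by
      have h := Real.rpow_le_rpow (Real.rpow_nonneg hcast 3) hp3
        (by norm_num : (0:ℝ) ≤ 1/3)
      rw [← Real.rpow_mul hcast] at h
      norm_num at h
      exact h
    have hT0 : 0 ≤ T n := by rw [hTdef]; dsimp only; positivity
    -- term 1
    have hterm1 : (n:ℝ) * (B n / T n ^ q) ≤ M / (n:ℝ)^2 := by
      rcases Nat.eq_zero_or_pos (p n) with h0 | hpos
      · have : B n = 0 := by
          rw [hBdef]; dsimp only; rw [h0]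
          push_cast
          rw [Real.sqrt_zero, Real.zero_rpow hq0.ne']
          ring
        rw [this]
        simp only [zero_div, mul_zero]
        exact div_nonneg hM (by positivity)
      · have hsp : (0:ℝ) < Real.sqrt (p n) :=
          Real.sqrt_pos.mpr (by exact_mod_cast hpos)
        have hspq : (0:ℝ) < Real.sqrt (p n) ^ q := Real.rpow_pos_of_pos hsp q
        have hTq : T n ^ q = (n:ℝ)^(3:ℕ) * Real.sqrt (p n) ^ q := by
          rw [hTdef]
          dsimp only
          rw [Real.mul_rpow (by positivity) (Real.sqrt_nonneg _),
            ← Real.rpow_mul (Nat.cast_nonneg n), div_mul_cancel₀ _ hq0.ne']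
          congr 1
          rw [← Real.rpow_natCast (n:ℝ) 3]
          norm_num
        rw [hTq, hBdef]
        dsimp only
        have hcancel : M * Real.sqrt (p n) ^ q / ((n:ℝ)^(3:ℕ) * Real.sqrt (p n) ^ q)
            = M / (n:ℝ)^(3:ℕ) := by
          rw [mul_comm ((n:ℝ)^(3:ℕ)) _, ← div_div, mul_div_assoc, div_self hspq.ne',
            mul_one]
        rw [hcancel, show (n:ℝ) * (M / (n:ℝ)^(3:ℕ)) = M * (n:ℝ) / (n:ℝ)^(3:ℕ) from by ring,
          div_le_div_iff₀ (by positivity) (by positivity)]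
        exact le_of_eq (by ring)
    -- term 2
    have hCn3 : (0:ℝ) < Cst * (n:ℝ)^(3:ℕ) := by positivity
    have hbase0 : (0:ℝ) ≤ 16 * Real.sqrt (p n) * T n / ε := by positivity
    have hbaseC : 16 * Real.sqrt (p n) * T n / ε ≤ Cst * (n:ℝ)^(3:ℕ) := by
      have hself : Real.sqrt (p n) * T n = (p n:ℝ) * (n:ℝ)^((3:ℝ)/q) := by
        rw [hTdef]
        dsimp only
        rw [show Real.sqrt (p n) * ((n:ℝ)^((3:ℝ)/q) * Real.sqrt (p n))
            = (Real.sqrt (p n) * Real.sqrt (p n)) * (n:ℝ)^((3:ℝ)/q) from by ring]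
        rw [Real.mul_self_sqrt hcast]
      have hnq2 : (n:ℝ)^((3:ℝ)/q) ≤ (n:ℝ)^(2:ℕ) := by
        rw [← Real.rpow_natCast (n:ℝ) 2]
        apply Real.rpow_le_rpow_of_exponent_le hn1R
        rw [div_le_iff₀ hq0]
        push_cast
        linarith
      have hmm : (p n:ℝ) * (n:ℝ)^((3:ℝ)/q) ≤ (n:ℝ) * (n:ℝ)^(2:ℕ) := by
        apply mul_le_mul hpn_le hnq2 (Real.rpow_nonneg hn0.le _) hn0.le
      calc 16 * Real.sqrt (p n) * T n / ε
          = 16 * (Real.sqrt (p n) * T n) / ε := by ring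
        _ = 16 * ((p n:ℝ) * (n:ℝ)^((3:ℝ)/q)) / ε := by rw [hself]
        _ ≤ 16 * ((n:ℝ) * (n:ℝ)^(2:ℕ)) / ε := by
            gcongr
        _ = Cst * (n:ℝ)^(3:ℕ) := by
            rw [hCstdef]
            field_simp
    have hterm2 : (16 * Real.sqrt (p n) * T n / ε) ^ (p n) * r₁ ^ n
        ≤ Real.exp (E n) := by
      have hr₁n : r₁ ^ n = Real.exp ((n:ℝ) * L) := by
        rw [hLdef, Real.exp_nat_mul, Real.exp_log hr₁pos]
      calc (16 * Real.sqrt (p n) * T n / ε) ^ (p n) * r₁ ^ n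
          ≤ (Cst * (n:ℝ)^(3:ℕ)) ^ (p n) * r₁ ^ n := by
            apply mul_le_mul_of_nonneg_right
              (pow_le_pow_left₀ hbase0 hbaseC _) (pow_nonneg hr₁pos.le n)
        _ ≤ (Cst * (n:ℝ)^(3:ℕ)) ^ ((n:ℝ)^((1:ℝ)/3)) * r₁ ^ n := by
            apply mul_le_mul_of_nonneg_right ?_ (pow_nonneg hr₁pos.le n)
            rw [← Real.rpow_natCast (Cst * (n:ℝ)^(3:ℕ)) (p n)]
            exact Real.rpow_le_rpow_of_exponent_le h1C hp13
        _ = Real.exp (E n) := by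
            rw [Real.rpow_def_of_pos hCn3, hr₁n, ← Real.exp_add, hEdef]
            dsimp only
            congr 1
            ring
    rw [hcdef]
    dsimp only
    exact add_le_add hterm1 hterm2
  have hcto : Tendsto c atTop (nhds 0) := by
    have hDto : Tendsto (fun n : ℕ => M / (n:ℝ)^2 + Real.exp (E n)) atTop (nhds 0) := by
      have := hMn2.add (Real.tendsto_exp_atBot.comp hEtendsto)
      rw [add_zero] at this
      exact this
    exact squeeze_zero' (Eventually.of_forall hc0) hcle hDto
  have hof : Tendsto (fun n => ENNReal.ofReal (c n)) atTop (nhds 0) := by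
    have := ENNReal.tendsto_ofReal hcto
    simpa using this
  constructor
  · have hupper : ∀ᶠ n in atTop, P {ω | (0 : EuclideanSpace ℝ (Fin (p n)))
        ∈ interior (convexHull ℝ (Set.range fun i : Fin n => X n i ω))} ≤ 1 :=
      Eventually.of_forall fun n => prob_le_one
    have hlower : ∀ᶠ n in atTop, 1 - ENNReal.ofReal (c n)
        ≤ P {ω | (0 : EuclideanSpace ℝ (Fin (p n)))
          ∈ interior (convexHull ℝ (Set.range fun i : Fin n => X n i ω))} := by
      filter_upwards [hPbound] with n hPb
      have hsum : (1:ℝ≥0∞) ≤ P {ω | (0 : EuclideanSpace ℝ (Fin (p n)))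
          ∈ interior (convexHull ℝ (Set.range fun i : Fin n => X n i ω))}
          + P (badset n) := by
        rw [← measure_univ (μ := P)]
        refine le_trans (measure_mono ?_) (measure_union_le _ _)
        intro ω _
        by_cases h : (0 : EuclideanSpace ℝ (Fin (p n)))
            ∈ interior (convexHull ℝ (Set.range fun i : Fin n => X n i ω))
        · exact Or.inl h
        · exact Or.inr h
      calc 1 - ENNReal.ofReal (c n) ≤ 1 - P (badset n) := tsub_le_tsub_left hPb 1
        _ ≤ _ := tsub_le_iff_right.mpr hsum
    have hlto : Tendsto (fun n => 1 - ENNReal.ofReal (c n)) atTop (nhds 1) := by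
      have := ENNReal.Tendsto.sub (tendsto_const_nhds (x := (1:ℝ≥0∞))
        (f := atTop)) hof (Or.inl ENNReal.one_ne_top)
      simpa using this
    exact tendsto_of_tendsto_of_tendsto_of_le_of_le' hlto tendsto_const_nhds hlower hupper
  · have hub : ∀ᶠ n in atTop, P {ω | ELval (p n) n (fun i => X n i ω) = 0}
        ≤ ENNReal.ofReal (c n) := by
      filter_upwards [hPbound, eventually_ge_atTop 1] with n hPb hn1
      refine le_trans (measure_mono ?_) hPb
      intro ω hω hmem
      exact ELval_ne_zero hn1 (fun i => X n i ω) hmem hω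
    exact tendsto_of_tendsto_of_tendsto_of_le_of_le' tendsto_const_nhds hof
      (Eventually.of_forall fun n => zero_le) hub
end

section
/- Let x₁, …, x_n ∈ ℝ^p and λ ∈ ℝ^p satisfy ‖λ‖ · max_{1≤i≤n} ‖x_i‖ ≤ 1/2. Then 1 + λ^T x_i > 0 for every i, and | 2 ∑_{i=1}^n log(1 + λ^T x_i) − 2 ∑_{i=1}^n λ^T x_i + ∑_{i=1}^n (λ^T x_i)² | ≤ (4/3) ‖λ‖ (max_{1≤i≤n} ‖x_i‖) ∑_{i=1}^n (λ^T x_i)². -/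
open scoped RealInnerProductSpace BigOperators

private lemma el_hasDeriv (c t : ℝ) (ht : 0 < 1 + t) :
    HasDerivAt (fun s : ℝ => Real.log (1 + s) - s + s ^ 2 / 2 - c * s ^ 3)
      ((1 + t)⁻¹ - 1 + t - 3 * c * t ^ 2) t := by
  have h1 : HasDerivAt (fun s : ℝ => 1 + s) 1 t := by
    simpa using (hasDerivAt_id t).const_add (1 : ℝ)
  have h2 : HasDerivAt (fun s : ℝ => Real.log (1 + s)) ((1 + t)⁻¹ * 1) t :=
    (Real.hasDerivAt_log (ne_of_gt ht)).comp t h1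
  have h3 : HasDerivAt (fun s : ℝ => s ^ 2 / 2) (t * 1) t := by
    simpa [mul_comm] using ((hasDerivAt_pow 2 t).div_const 2)
  have h4 : HasDerivAt (fun s : ℝ => c * s ^ 3) (c * (3 * t ^ 2)) t := by
    simpa using (hasDerivAt_pow 3 t).const_mul c
  have := (((h2.sub (hasDerivAt_id t)).add h3).sub h4 :
    HasDerivAt (fun s : ℝ => Real.log (1 + s) - s + s ^ 2 / 2 - c * s ^ 3) _ t)
  refine this.congr_deriv ?_
  ring

private lemma el_key (t : ℝ) (ht : |t| ≤ 1 / 2) :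
    |Real.log (1 + t) - t + t ^ 2 / 2| ≤ 2 / 3 * |t| ^ 3 := by
  have hpos : ∀ s : ℝ, -(1/2) ≤ s → 0 < 1 + s := fun s hs => by linarith
  have hcont : ∀ c : ℝ, ContinuousOn
      (fun s : ℝ => Real.log (1 + s) - s + s ^ 2 / 2 - c * s ^ 3) (Set.Icc (-(1/2)) (1/2)) := by
    intro c
    apply ContinuousOn.sub
    apply ContinuousOn.add
    apply ContinuousOn.sub
    · apply ContinuousOn.log (by fun_prop)
      intro s hs
      exact ne_of_gt (hpos s hs.1)
    all_goals fun_prop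
  have hderiv : ∀ (c : ℝ) (s : ℝ), -(1/2) ≤ s →
      deriv (fun s : ℝ => Real.log (1 + s) - s + s ^ 2 / 2 - c * s ^ 3) s
        = (1 + s)⁻¹ - 1 + s - 3 * c * s ^ 2 := fun c s hs =>
    (el_hasDeriv c s (hpos s hs)).deriv
  have hdiff : ∀ (c : ℝ) (s : ℝ), -(1/2) ≤ s → DifferentiableAt ℝ
      (fun s : ℝ => Real.log (1 + s) - s + s ^ 2 / 2 - c * s ^ 3) s := fun c s hs =>
    (el_hasDeriv c s (hpos s hs)).differentiableAt
  have habs := abs_le.1 ht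
  rcases le_or_gt 0 t with htp | htn
  · -- t ≥ 0
    have hmem0 : (0:ℝ) ∈ Set.Icc (0:ℝ) (1/2) := by constructor <;> norm_num
    have hmemt : t ∈ Set.Icc (0:ℝ) (1/2) := ⟨htp, habs.2⟩
    have hsub : Set.Icc (0:ℝ) (1/2) ⊆ Set.Icc (-(1/2)) (1/2) := by
      intro s hs; exact ⟨by linarith [hs.1], hs.2⟩
    -- lower bound : f nondecreasing (c = 0)
    have hlow : MonotoneOn (fun s : ℝ => Real.log (1 + s) - s + s ^ 2 / 2 - 0 * s ^ 3)
        (Set.Icc (0:ℝ) (1/2)) := by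
      apply monotoneOn_of_deriv_nonneg (convex_Icc _ _) ((hcont 0).mono hsub)
        (fun s hs => (hdiff 0 s (by have := interior_subset hs; exact (hsub this).1)).differentiableWithinAt)
      intro s hs
      rw [interior_Icc] at hs
      rw [hderiv 0 s (by linarith [hs.1])]
      have h1s : (0:ℝ) < 1 + s := by linarith [hs.1]
      have hinv : (1 + s) * (1 + s)⁻¹ = 1 := mul_inv_cancel₀ (ne_of_gt h1s)
      nlinarith [sq_nonneg s, hs.1.le, mul_pos h1s (inv_pos.2 h1s)]
    -- upper bound : f - (2/3)s³ nonincreasing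
    have hupp : AntitoneOn (fun s : ℝ => Real.log (1 + s) - s + s ^ 2 / 2 - (2/3) * s ^ 3)
        (Set.Icc (0:ℝ) (1/2)) := by
      apply antitoneOn_of_deriv_nonpos (convex_Icc _ _) ((hcont (2/3)).mono hsub)
        (fun s hs => (hdiff (2/3) s (by have := interior_subset hs; exact (hsub this).1)).differentiableWithinAt)
      intro s hs
      rw [interior_Icc] at hs
      rw [hderiv (2/3) s (by linarith [hs.1])]
      have h1s : (0:ℝ) < 1 + s := by linarith [hs.1]
      have hinv : (1 + s) * (1 + s)⁻¹ = 1 := mul_inv_cancel₀ (ne_of_gt h1s)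
      nlinarith [sq_nonneg s, hs.1.le, mul_pos h1s (inv_pos.2 h1s)]
    have h1 := hlow hmem0 hmemt htp
    have h2 := hupp hmem0 hmemt htp
    simp only [Real.log_one, add_zero] at h1 h2
    norm_num at h1 h2
    rw [abs_of_nonneg htp, abs_le]
    constructor <;> nlinarith [pow_nonneg htp 3]
  · -- t < 0
    have hmem0 : (0:ℝ) ∈ Set.Icc (-(1/2):ℝ) 0 := by constructor <;> norm_num
    have hmemt : t ∈ Set.Icc (-(1/2):ℝ) 0 := ⟨habs.1, htn.le⟩
    have hsub : Set.Icc (-(1/2):ℝ) 0 ⊆ Set.Icc (-(1/2)) (1/2) := by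
      intro s hs; exact ⟨hs.1, by linarith [hs.2]⟩
    have hlow : MonotoneOn (fun s : ℝ => Real.log (1 + s) - s + s ^ 2 / 2 - 0 * s ^ 3)
        (Set.Icc (-(1/2):ℝ) 0) := by
      apply monotoneOn_of_deriv_nonneg (convex_Icc _ _) ((hcont 0).mono hsub)
        (fun s hs => (hdiff 0 s (by have := interior_subset hs; exact (hsub this).1)).differentiableWithinAt)
      intro s hs
      rw [interior_Icc] at hs
      rw [hderiv 0 s hs.1.le]
      have h1s : (0:ℝ) < 1 + s := by linarith [hs.1]
      have hinv : (1 + s) * (1 + s)⁻¹ = 1 := mul_inv_cancel₀ (ne_of_gt h1s)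
      nlinarith [sq_nonneg s, mul_pos h1s (inv_pos.2 h1s)]
    have hupp : AntitoneOn (fun s : ℝ => Real.log (1 + s) - s + s ^ 2 / 2 - (2/3) * s ^ 3)
        (Set.Icc (-(1/2):ℝ) 0) := by
      apply antitoneOn_of_deriv_nonpos (convex_Icc _ _) ((hcont (2/3)).mono hsub)
        (fun s hs => (hdiff (2/3) s (by have := interior_subset hs; exact (hsub this).1)).differentiableWithinAt)
      intro s hs
      rw [interior_Icc] at hs
      rw [hderiv (2/3) s hs.1.le]
      have h1s : (0:ℝ) < 1 + s := by linarith [hs.1]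
      have hinv : (1 + s) * (1 + s)⁻¹ = 1 := mul_inv_cancel₀ (ne_of_gt h1s)
      nlinarith [hinv, mul_nonneg (sq_nonneg s) (show (0:ℝ) ≤ 1 + 2*s by linarith [hs.1]), mul_pos h1s (inv_pos.2 h1s)]
    have h1 := hlow hmemt hmem0 htn.le
    have h2 := hupp hmemt hmem0 htn.le
    simp only [Real.log_one, add_zero] at h1 h2
    norm_num at h1 h2
    rw [abs_of_neg htn, abs_le]
    constructor <;> nlinarith

/-- **Quadratic approximation bound for the log empirical likelihood criterion
(from the proofs of Theorem 2.1 and Proposition 4.1).**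
Let `x₁, …, xₙ ∈ ℝ^p` (with `n ≥ 1`) and `λ ∈ ℝ^p` satisfy
`‖λ‖ · max_i ‖xᵢ‖ ≤ 1/2`.  Then `1 + λᵀxᵢ > 0` for every `i`, and
`|2 ∑ log(1 + λᵀxᵢ) − 2 ∑ λᵀxᵢ + ∑ (λᵀxᵢ)²|
  ≤ (4/3) ‖λ‖ (max_i ‖xᵢ‖) ∑ (λᵀxᵢ)²`. -/
theorem log_EL_quadratic_approximation
    (p n : ℕ) (hn : 0 < n)
    (x : Fin n → EuclideanSpace ℝ (Fin p))
    (lam : EuclideanSpace ℝ (Fin p))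
    (h : ‖lam‖ * (⨆ i : Fin n, ‖x i‖) ≤ 1 / 2) :
    (∀ i : Fin n, 0 < 1 + ⟪lam, x i⟫)
    ∧ |2 * ∑ i : Fin n, Real.log (1 + ⟪lam, x i⟫)
        - 2 * ∑ i : Fin n, ⟪lam, x i⟫
        + ∑ i : Fin n, ⟪lam, x i⟫ ^ 2|
      ≤ 4 / 3 * ‖lam‖ * (⨆ i : Fin n, ‖x i‖) * ∑ i : Fin n, ⟪lam, x i⟫ ^ 2 := by
  haveI : Nonempty (Fin n) := ⟨⟨0, hn⟩⟩
  set M : ℝ := ⨆ i : Fin n, ‖x i‖ with hM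
  have hMle : ∀ i : Fin n, ‖x i‖ ≤ M :=
    fun i => le_ciSup (f := fun j : Fin n => ‖x j‖) (Set.Finite.bddAbove (Set.finite_range _)) i
  have hti : ∀ i : Fin n, |⟪lam, x i⟫| ≤ ‖lam‖ * M := fun i => by
    calc |⟪lam, x i⟫| ≤ ‖lam‖ * ‖x i‖ := abs_real_inner_le_norm lam (x i)
      _ ≤ ‖lam‖ * M := by
          exact mul_le_mul_of_nonneg_left (hMle i) (norm_nonneg _)
  have hti' : ∀ i : Fin n, |⟪lam, x i⟫| ≤ 1 / 2 := fun i => (hti i).trans h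
  have hposi : ∀ i : Fin n, 0 < 1 + ⟪lam, x i⟫ := fun i => by
    have := (abs_le.1 (hti' i)).1; linarith
  refine ⟨hposi, ?_⟩
  have key : ∀ i : Fin n,
      |2 * Real.log (1 + ⟪lam, x i⟫) - 2 * ⟪lam, x i⟫ + ⟪lam, x i⟫ ^ 2|
        ≤ 4 / 3 * ‖lam‖ * M * ⟪lam, x i⟫ ^ 2 := by
    intro i
    set t : ℝ := ⟪lam, x i⟫ with htdef
    have h1 := el_key t (hti' i)
    have h2 : |2 * Real.log (1 + t) - 2 * t + t ^ 2| = 2 * |Real.log (1 + t) - t + t ^ 2 / 2| := by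
      have he : 2 * Real.log (1 + t) - 2 * t + t ^ 2
          = 2 * (Real.log (1 + t) - t + t ^ 2 / 2) := by ring
      rw [he, abs_mul, abs_of_pos (by norm_num : (0:ℝ) < 2)]
    rw [h2]
    have h3 : |t| ^ 3 = |t| * t ^ 2 := by
      rw [pow_succ, sq_abs]; ring
    calc 2 * |Real.log (1 + t) - t + t ^ 2 / 2| ≤ 2 * (2 / 3 * |t| ^ 3) := by linarith
      _ = 4 / 3 * |t| * t ^ 2 := by rw [h3]; ring
      _ ≤ 4 / 3 * (‖lam‖ * M) * t ^ 2 := by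
          apply mul_le_mul_of_nonneg_right _ (sq_nonneg t)
          have := hti i
          linarith
      _ = 4 / 3 * ‖lam‖ * M * t ^ 2 := by ring
  calc |2 * ∑ i : Fin n, Real.log (1 + ⟪lam, x i⟫)
        - 2 * ∑ i : Fin n, ⟪lam, x i⟫
        + ∑ i : Fin n, ⟪lam, x i⟫ ^ 2|
      = |∑ i : Fin n, (2 * Real.log (1 + ⟪lam, x i⟫) - 2 * ⟪lam, x i⟫ + ⟪lam, x i⟫ ^ 2)| := by
        rw [Finset.sum_add_distrib, Finset.sum_sub_distrib, ← Finset.mul_sum, ← Finset.mul_sum]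
    _ ≤ ∑ i : Fin n, |2 * Real.log (1 + ⟪lam, x i⟫) - 2 * ⟪lam, x i⟫ + ⟪lam, x i⟫ ^ 2| :=
        Finset.abs_sum_le_sum_abs _ _
    _ ≤ ∑ i : Fin n, 4 / 3 * ‖lam‖ * M * ⟪lam, x i⟫ ^ 2 := Finset.sum_le_sum fun i _ => key i
    _ = 4 / 3 * ‖lam‖ * M * ∑ i : Fin n, ⟪lam, x i⟫ ^ 2 := by rw [← Finset.mul_sum]
end
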